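/- arXiv:0810.1643 — 5 statements merged into one kernel-verified Lean document; each statement's English description precedes it below -/
import Mathlib

section
/- If there exists a continuum which has surjective span zero and is not chainable, then there exists a metrizable continuum which has surjective span zero and is not chainable. -/
/-- A continuum `X` is chainable if every finite open cover has a finite open
refinement that can be enumerated as `V_0, …, V_{n-1}` with
`V_i ∩ V_j ≠ ∅` iff `|i - j| ≤ 1`. -/
def Chainable (X : Type*) [TopologicalSpace X] : Prop :=
  ∀ U : Finset (Set X), (∀ u ∈ U, IsOpen u) → ⋃₀ (U : Set (Set X)) = Set.univ →
    ∃ (n : ℕ) (V : Fin n → Set X),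
      (∀ i, IsOpen (V i)) ∧ (⋃ i, V i) = Set.univ ∧
      (∀ i, ∃ u ∈ U, V i ⊆ u) ∧
      ∀ i j : Fin n, (V i ∩ V j).Nonempty ↔ |((i : ℕ) : ℤ) - ((j : ℕ) : ℤ)| ≤ 1

/-- A continuum has surjective span zero if every subcontinuum `Z` of `X × X` with
`π₁[Z] = π₂[Z] = X` meets the diagonal. -/
def SurjectiveSpanZero (X : Type*) [TopologicalSpace X] : Prop :=
  ∀ Z : Set (X × X), IsClosed Z → IsConnected Z →
    Prod.fst '' Z = Set.univ → Prod.snd '' Z = Set.univ → ∃ x : X, (x, x) ∈ Z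



set_option linter.unusedSectionVars false
open Set Topology Filter

noncomputable section
attribute [local instance 2000] Classical.propDecidable

namespace SpanProof

variable {X Y : Type*} [TopologicalSpace X] [TopologicalSpace Y]

/-- finite open cover -/
def IsCov (U : Finset (Set X)) : Prop :=
  (∀ u ∈ U, IsOpen u) ∧ ∀ x : X, ∃ u ∈ U, x ∈ u

/-- refinement -/
def Ref (V U : Finset (Set X)) : Prop := ∀ v ∈ V, ∃ u ∈ U, v ⊆ u

theorem Ref.refl (U : Finset (Set X)) : Ref U U := fun v hv => ⟨v, hv, le_rfl⟩

theorem Ref.trans {W V U : Finset (Set X)} (h1 : Ref W V) (h2 : Ref V U) : Ref W U := by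
  intro w hw
  obtain ⟨v, hv, hwv⟩ := h1 w hw
  obtain ⟨u, hu, hvu⟩ := h2 v hv
  exact ⟨u, hu, hwv.trans hvu⟩

def inter2 (U V : Finset (Set X)) : Finset (Set X) :=
  (U ×ˢ V).image fun p => p.1 ∩ p.2

theorem inter2_isCov {U V : Finset (Set X)} (hU : IsCov U) (hV : IsCov V) :
    IsCov (inter2 U V) := by
  constructor
  · intro u hu
    simp only [inter2, Finset.mem_image, Finset.mem_product] at hu
    obtain ⟨⟨a, b⟩, ⟨ha, hb⟩, rfl⟩ := hu
    exact (hU.1 a ha).inter (hV.1 b hb)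
  · intro x
    obtain ⟨a, ha, hxa⟩ := hU.2 x
    obtain ⟨b, hb, hxb⟩ := hV.2 x
    refine ⟨a ∩ b, ?_, hxa, hxb⟩
    simp only [inter2, Finset.mem_image, Finset.mem_product]
    exact ⟨(a, b), ⟨ha, hb⟩, rfl⟩

theorem inter2_ref_left (U V : Finset (Set X)) : Ref (inter2 U V) U := by
  intro w hw
  simp only [inter2, Finset.mem_image, Finset.mem_product] at hw
  obtain ⟨⟨a, b⟩, ⟨ha, hb⟩, rfl⟩ := hw
  exact ⟨a, ha, inter_subset_left⟩

theorem inter2_ref_right (U V : Finset (Set X)) : Ref (inter2 U V) V := by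
  intro w hw
  simp only [inter2, Finset.mem_image, Finset.mem_product] at hw
  obtain ⟨⟨a, b⟩, ⟨ha, hb⟩, rfl⟩ := hw
  exact ⟨b, hb, inter_subset_right⟩

def refineList : List (Finset (Set X)) → Finset (Set X)
  | [] => {Set.univ}
  | C :: L => inter2 C (refineList L)

theorem refineList_isCov : ∀ {L : List (Finset (Set X))}, (∀ C ∈ L, IsCov C) →
    IsCov (refineList L)
  | [], _ => by
      constructor
      · intro u hu; simp only [refineList, Finset.mem_singleton] at hu; subst hu; exact isOpen_univ
      · intro x; exact ⟨Set.univ, by simp [refineList], trivial⟩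
  | C :: L, h => by
      exact inter2_isCov (h C (by simp)) (refineList_isCov fun D hD => h D (by simp [hD]))

theorem refineList_ref : ∀ {L : List (Finset (Set X))} {C : Finset (Set X)}, C ∈ L →
    Ref (refineList L) C
  | C' :: L, C, h => by
      rcases List.mem_cons.1 h with h | h
      · subst h; exact inter2_ref_left _ _
      · exact (inter2_ref_right _ _).trans (refineList_ref h)

def Adj (p q : Set X × Set X) : Prop :=
  (p.1 ∩ q.1).Nonempty ∧ (p.2 ∩ q.2).Nonempty

/-- combinatorial "span pattern" on the cover `V`, separated relative to `U₀` -/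
def Patt (U₀ V : Finset (Set X)) (S : Finset (Set X × Set X)) : Prop :=
  (∀ p ∈ S, p.1 ∈ V ∧ p.2 ∈ V ∧ p.1.Nonempty ∧ p.2.Nonempty) ∧
  (∀ x : X, ∃ p ∈ S, x ∈ p.1) ∧
  (∀ x : X, ∃ p ∈ S, x ∈ p.2) ∧
  (∀ p ∈ S, ∀ w ∈ U₀, closure p.1 ∩ w = ∅ ∨ closure p.2 ∩ w = ∅) ∧
  (∀ p ∈ S, ∀ q ∈ S,
    Relation.ReflTransGen (fun a b => a ∈ S ∧ b ∈ S ∧ Adj a b) p q)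

/-- a pattern separated rel `U₀` is separated rel any refinement of `U₀` -/
theorem Patt.of_ref {U₀ U₁ V : Finset (Set X)} {S : Finset (Set X × Set X)}
    (hS : Patt U₀ V S) (h : Ref U₁ U₀) : Patt U₁ V S := by
  refine ⟨hS.1, hS.2.1, hS.2.2.1, ?_, hS.2.2.2.2⟩
  intro p hp w hw
  obtain ⟨w', hw', hww'⟩ := h w hw
  rcases hS.2.2.2.1 p hp w' hw' with h1 | h1
  · exact Or.inl (eq_empty_of_subset_empty (h1 ▸ inter_subset_inter_right _ hww'))
  · exact Or.inr (eq_empty_of_subset_empty (h1 ▸ inter_subset_inter_right _ hww'))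

/-- pull a finite family of sets back along a map -/
def pullF (f : X → Y) (V : Finset (Set Y)) : Finset (Set X) := V.image (f ⁻¹' ·)

theorem pullF_isCov {f : X → Y} (hf : Continuous f) {V : Finset (Set Y)} (hV : IsCov V) :
    IsCov (pullF f V) := by
  constructor
  · intro u hu
    simp only [pullF, Finset.mem_image] at hu
    obtain ⟨v, hv, rfl⟩ := hu
    exact (hV.1 v hv).preimage hf
  · intro x
    obtain ⟨v, hv, hxv⟩ := hV.2 (f x)
    exact ⟨f ⁻¹' v, Finset.mem_image_of_mem _ hv, hxv⟩

theorem pullF_ref {f : X → Y} {V W : Finset (Set Y)} (h : Ref V W) :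
    Ref (pullF f V) (pullF f W) := by
  intro v hv
  simp only [pullF, Finset.mem_image] at hv ⊢
  obtain ⟨v', hv', rfl⟩ := hv
  obtain ⟨w, hw, hsub⟩ := h v' hv'
  exact ⟨f ⁻¹' w, ⟨w, hw, rfl⟩, preimage_mono hsub⟩

/-- patterns pull back along continuous surjections -/
theorem Patt.pull {f : X → Y} (hf : Continuous f) (hsurj : Function.Surjective f)
    {U₀ V : Finset (Set Y)} {S : Finset (Set Y × Set Y)} (hS : Patt U₀ V S) :
    Patt (pullF f U₀) (pullF f V) (S.image fun p => (f ⁻¹' p.1, f ⁻¹' p.2)) := by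
  obtain ⟨hmem, hon1, hon2, hsep, hconn⟩ := hS
  refine ⟨?_, ?_, ?_, ?_, ?_⟩
  · intro p hp
    simp only [Finset.mem_image] at hp
    obtain ⟨q, hq, rfl⟩ := hp
    obtain ⟨h1, h2, h3, h4⟩ := hmem q hq
    exact ⟨Finset.mem_image_of_mem _ h1, Finset.mem_image_of_mem _ h2,
      h3.preimage hsurj, h4.preimage hsurj⟩
  · intro x
    obtain ⟨p, hp, hx⟩ := hon1 (f x)
    exact ⟨(f ⁻¹' p.1, f ⁻¹' p.2), Finset.mem_image_of_mem _ hp, hx⟩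
  · intro x
    obtain ⟨p, hp, hx⟩ := hon2 (f x)
    exact ⟨(f ⁻¹' p.1, f ⁻¹' p.2), Finset.mem_image_of_mem _ hp, hx⟩
  · intro p hp w hw
    simp only [Finset.mem_image] at hp
    obtain ⟨q, hq, rfl⟩ := hp
    simp only [pullF, Finset.mem_image] at hw
    obtain ⟨w', hw', rfl⟩ := hw
    rcases hsep q hq w' hw' with h1 | h1
    · refine Or.inl (eq_empty_of_subset_empty ?_)
      intro x hx
      have : f x ∈ closure q.1 ∩ w' :=
        ⟨hf.closure_preimage_subset _ hx.1, hx.2⟩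
      simp [h1] at this
    · refine Or.inr (eq_empty_of_subset_empty ?_)
      intro x hx
      have : f x ∈ closure q.2 ∩ w' :=
        ⟨hf.closure_preimage_subset _ hx.1, hx.2⟩
      simp [h1] at this
  · intro p hp q hq
    simp only [Finset.mem_image] at hp hq
    obtain ⟨p', hp', rfl⟩ := hp
    obtain ⟨q', hq', rfl⟩ := hq
    have := hconn p' hp' q' hq'
    refine Relation.ReflTransGen.lift (r := fun a b => a ∈ S ∧ b ∈ S ∧ Adj a b)
      (fun p => ((f ⁻¹' p.1, f ⁻¹' p.2) : Set X × Set X)) ?_ _ _ this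
    rintro a b ⟨ha, hb, ⟨⟨y1, hy1⟩, ⟨y2, hy2⟩⟩⟩
    refine ⟨Finset.mem_image_of_mem _ ha, Finset.mem_image_of_mem _ hb, ?_, ?_⟩
    · obtain ⟨x1, rfl⟩ := hsurj y1
      exact ⟨x1, hy1⟩
    · obtain ⟨x2, rfl⟩ := hsurj y2
      exact ⟨x2, hy2⟩

/-! ### boxes and realizations of patterns -/

def box (p : Set X × Set X) : Set (X × X) := closure p.1 ×ˢ closure p.2

theorem box_isClosed (p : Set X × Set X) : IsClosed (box p) :=
  isClosed_closure.prod isClosed_closure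

def Kset (S : Finset (Set X × Set X)) : Set (X × X) := ⋃ p ∈ S, box p

theorem Kset_isClosed (S : Finset (Set X × Set X)) : IsClosed (Kset S) :=
  (S.finite_toSet).isClosed_biUnion fun p _ => box_isClosed p

theorem Kset_disjoint_diag {U₀ V : Finset (Set X)} {S : Finset (Set X × Set X)}
    (hS : Patt U₀ V S) : Kset S ⊆ (⋃ w ∈ U₀, w ×ˢ w)ᶜ := by
  intro z hz
  simp only [Kset, mem_iUnion] at hz
  obtain ⟨p, hp, hz⟩ := hz
  simp only [mem_compl_iff, mem_iUnion]
  rintro ⟨w, hw, hzw⟩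
  rcases hS.2.2.2.1 p hp w hw with h | h
  · exact absurd (mem_inter hz.1 hzw.1) (by simp [h])
  · exact absurd (mem_inter hz.2 hzw.2) (by simp [h])

theorem Kset_proj_fst {U₀ V : Finset (Set X)} {S : Finset (Set X × Set X)}
    (hS : Patt U₀ V S) (x : X) : ∃ y : X, (x, y) ∈ Kset S := by
  obtain ⟨p, hp, hx⟩ := hS.2.1 x
  obtain ⟨y, hy⟩ := (hS.1 p hp).2.2.2
  exact ⟨y, mem_iUnion₂.2 ⟨p, hp, subset_closure hx, subset_closure hy⟩⟩

theorem Kset_proj_snd {U₀ V : Finset (Set X)} {S : Finset (Set X × Set X)}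
    (hS : Patt U₀ V S) (y : X) : ∃ x : X, (x, y) ∈ Kset S := by
  obtain ⟨p, hp, hy⟩ := hS.2.2.1 y
  obtain ⟨x, hx⟩ := (hS.1 p hp).2.2.1
  exact ⟨x, mem_iUnion₂.2 ⟨p, hp, subset_closure hx, subset_closure hy⟩⟩

/-- connectivity of the pattern forces its realization to one side of a separation -/
theorem Kset_side {U₀ V : Finset (Set X)} {S : Finset (Set X × Set X)}
    (hS : Patt U₀ V S) {A B : Set (X × X)} (hdisj : Disjoint A B)
    (hbox : ∀ p ∈ S, box p ⊆ A ∨ box p ⊆ B)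
    {p₀ : Set X × Set X} (hp₀ : p₀ ∈ S) (hA : box p₀ ⊆ A) :
    Kset S ⊆ A := by
  have key : ∀ q ∈ S, box q ⊆ A := by
    intro q hq
    have hchain := hS.2.2.2.2 p₀ hp₀ q hq
    induction hchain with
    | refl => exact hA
    | tail hbc step ih =>
      rename_i b c
      obtain ⟨hbS, hcS, ⟨⟨x, hx⟩, ⟨y, hy⟩⟩⟩ := step
      have hbA : box b ⊆ A := ih hbS
      have hxy_b : (x, y) ∈ box b := ⟨subset_closure hx.1, subset_closure hy.1⟩
      have hxy_c : (x, y) ∈ box c := ⟨subset_closure hx.2, subset_closure hy.2⟩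
      rcases hbox c hcS with h | h
      · exact h
      · exact absurd (Set.disjoint_left.1 hdisj (hbA hxy_b)) (fun hn => hn (h hxy_c))
  intro z hz
  simp only [Kset, mem_iUnion] at hz
  obtain ⟨p, hp, hz⟩ := hz
  exact key p hp hz

/-! ### box refinement lemma -/

theorem boxRef [CompactSpace X] [T2Space X] (O : Finset (Set (X × X)))
    (hO : ∀ o ∈ O, IsOpen o) (hcov : ∀ z : X × X, ∃ o ∈ O, z ∈ o) :
    ∃ W : Finset (Set X), IsCov W ∧
      ∀ w ∈ W, ∀ w' ∈ W, ∃ o ∈ O, (closure w ×ˢ closure w') ⊆ o := by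
  -- step 0: good box neighborhoods
  have step0 : ∀ z : X × X, ∃ u v : Set X, IsOpen u ∧ IsOpen v ∧ z.1 ∈ u ∧ z.2 ∈ v ∧
      ∃ o ∈ O, (closure u ×ˢ closure v) ⊆ o := by
    intro z
    obtain ⟨o, ho, hzo⟩ := hcov z
    have hno : o ∈ 𝓝 z := (hO o ho).mem_nhds hzo
    rw [← @Prod.mk.eta _ _ z, mem_nhds_prod_iff] at hno
    obtain ⟨u₀, hu₀, v₀, hv₀, hsub⟩ := hno
    obtain ⟨t₁, ht₁n, ht₁c, ht₁s⟩ := exists_mem_nhds_isClosed_subset hu₀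
    obtain ⟨t₂, ht₂n, ht₂c, ht₂s⟩ := exists_mem_nhds_isClosed_subset hv₀
    refine ⟨interior t₁, interior t₂, isOpen_interior, isOpen_interior,
      mem_interior_iff_mem_nhds.2 ht₁n, mem_interior_iff_mem_nhds.2 ht₂n, o, ho, ?_⟩
    refine Subset.trans (Set.prod_mono ?_ ?_) hsub
    · exact (closure_minimal interior_subset ht₁c).trans ht₁s
    · exact (closure_minimal interior_subset ht₂c).trans ht₂s
  choose u v huo hvo hum hvm step0' using fun z : X × X => step0 z
  -- step 1: tubes. for each x : X a neighborhood ux x and a finite cover Vx x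
  have step1 : ∀ x : X, ∃ ux : Set X, ∃ Vx : Finset (Set X), IsOpen ux ∧ x ∈ ux ∧
      IsCov Vx ∧ ∀ w ∈ Vx, ∃ o ∈ O, (closure ux ×ˢ closure w) ⊆ o := by
    intro x
    have hcov' : univ ⊆ ⋃ y : X, v (x, y) := by
      intro y _
      exact mem_iUnion.2 ⟨y, hvm (x, y)⟩
    obtain ⟨t, ht⟩ := isCompact_univ.elim_finite_subcover (fun y : X => v (x, y))
      (fun y => hvo (x, y)) hcov'
    by_cases hte : t.Nonempty
    · refine ⟨⋂ y ∈ t, u (x, y), t.image (fun y => v (x, y)), ?_, ?_, ?_, ?_⟩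
      · exact isOpen_biInter_finset fun y _ => huo (x, y)
      · exact mem_iInter₂.2 fun y _ => hum (x, y)
      · constructor
        · intro w hw
          simp only [Finset.mem_image] at hw
          obtain ⟨y, _, rfl⟩ := hw
          exact hvo (x, y)
        · intro z
          have := ht (mem_univ z)
          simp only [mem_iUnion] at this
          obtain ⟨y, hy, hz⟩ := this
          exact ⟨v (x, y), Finset.mem_image_of_mem _ hy, hz⟩
      · intro w hw
        simp only [Finset.mem_image] at hw
        obtain ⟨y, hyt, rfl⟩ := hw
        obtain ⟨o, ho, hsub⟩ := step0' (x, y)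
        refine ⟨o, ho, Subset.trans (Set.prod_mono ?_ Subset.rfl) hsub⟩
        exact closure_mono (biInter_subset_of_mem hyt) |>.trans
          (le_refl (closure (u (x, y))))
    · exfalso
      rw [Finset.not_nonempty_iff_eq_empty] at hte
      subst hte
      have := ht (mem_univ x)
      simp at this
  choose ux Vx huxo huxm hVxcov hVxprop using step1
  -- step 2: finitely many tubes cover
  have hcov2 : univ ⊆ ⋃ x : X, ux x := fun x _ => mem_iUnion.2 ⟨x, huxm x⟩
  obtain ⟨s, hs⟩ := isCompact_univ.elim_finite_subcover ux huxo hcov2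
  -- step 3: common refinement
  set L : List (Finset (Set X)) := (s.image ux) :: s.toList.map Vx with hL
  refine ⟨refineList L, refineList_isCov ?_, ?_⟩
  · intro C hC
    rw [hL, List.mem_cons] at hC
    rcases hC with rfl | hC
    · constructor
      · intro w hw
        simp only [Finset.mem_image] at hw
        obtain ⟨x, _, rfl⟩ := hw
        exact huxo x
      · intro z
        have := hs (mem_univ z)
        simp only [mem_iUnion] at this
        obtain ⟨x, hx, hz⟩ := this
        exact ⟨ux x, Finset.mem_image_of_mem _ hx, hz⟩
    · simp only [List.mem_map] at hC
      obtain ⟨x, _, rfl⟩ := hC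
      exact hVxcov x
  · intro w hw w' hw'
    obtain ⟨uu, huu, hwuu⟩ := refineList_ref (L := L) (C := s.image ux) (by rw [hL]; exact List.mem_cons_self) w hw
    simp only [Finset.mem_image] at huu
    obtain ⟨x, hxs, rfl⟩ := huu
    have hVxL : Vx x ∈ L := by
      rw [hL, List.mem_cons]
      exact Or.inr (List.mem_map_of_mem (f := Vx) (Finset.mem_toList.2 hxs))
    obtain ⟨vv, hvv, hwvv⟩ := refineList_ref hVxL w' hw'
    obtain ⟨o, ho, hsub⟩ := hVxprop x vv hvv
    exact ⟨o, ho, Subset.trans (Set.prod_mono (closure_mono hwuu) (closure_mono hwvv)) hsub⟩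

/-! ### existence of patterns from a diagonal-avoiding continuum (easy direction) -/

theorem lemmaB [CompactSpace X] [T2Space X]
    {Z : Set (X × X)} (hZc : IsClosed Z) (hZconn : IsConnected Z)
    (h1 : ∀ x : X, ∃ y, (x, y) ∈ Z) (h2 : ∀ y : X, ∃ x, (x, y) ∈ Z)
    (hdiag : ∀ x : X, (x, x) ∉ Z) :
    ∃ U₀ : Finset (Set X), IsCov U₀ ∧ ∀ V : Finset (Set X), IsCov V →
      ∃ V', IsCov V' ∧ Ref V' V ∧ ∃ S, Patt U₀ V' S := by
  -- separating cover U₀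
  have hstep : ∀ x : X, ∃ p : Set X, IsOpen p ∧ x ∈ p ∧
      (closure p ×ˢ closure p) ∩ Z = ∅ := by
    intro x
    have hno : Zᶜ ∈ 𝓝 ((x, x) : X × X) := hZc.isOpen_compl.mem_nhds (hdiag x)
    rw [mem_nhds_prod_iff] at hno
    obtain ⟨u₀, hu₀, v₀, hv₀, hsub⟩ := hno
    obtain ⟨t, htn, htc, hts⟩ := exists_mem_nhds_isClosed_subset (inter_mem hu₀ hv₀)
    refine ⟨interior t, isOpen_interior, mem_interior_iff_mem_nhds.2 htn, ?_⟩
    have hcl : closure (interior t) ⊆ t := closure_minimal interior_subset htc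
    apply eq_empty_of_subset_empty
    rintro z ⟨⟨hz1, hz2⟩, hzZ⟩
    exact hsub ⟨(hts (hcl hz1)).1, (hts (hcl hz2)).2⟩ hzZ
  choose p hpo hpm hpZ using hstep
  obtain ⟨s, hs⟩ := isCompact_univ.elim_finite_subcover p hpo
    (fun x _ => mem_iUnion.2 ⟨x, hpm x⟩)
  set U₀ : Finset (Set X) := s.image p with hU₀
  have hU₀cov : IsCov U₀ := by
    constructor
    · intro u hu
      simp only [hU₀, Finset.mem_image] at hu
      obtain ⟨x, _, rfl⟩ := hu
      exact hpo x
    · intro x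
      have := hs (mem_univ x)
      simp only [mem_iUnion] at this
      obtain ⟨y, hy, hx⟩ := this
      exact ⟨p y, Finset.mem_image_of_mem _ hy, hx⟩
  set N : Set (X × X) := ⋃ w ∈ U₀, closure w ×ˢ closure w with hN
  have hNZ : N ∩ Z = ∅ := by
    apply eq_empty_of_subset_empty
    rintro z ⟨hzN, hzZ⟩
    simp only [hN, mem_iUnion] at hzN
    obtain ⟨w, hw, hzw⟩ := hzN
    simp only [hU₀, Finset.mem_image] at hw
    obtain ⟨x, _, rfl⟩ := hw
    have : z ∈ (closure (p x) ×ˢ closure (p x)) ∩ Z := ⟨hzw, hzZ⟩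
    simp [hpZ x] at this
  have hNc : IsClosed N :=
    (U₀.finite_toSet).isClosed_biUnion fun w _ => isClosed_closure.prod isClosed_closure
  refine ⟨U₀, hU₀cov, ?_⟩
  intro V hV
  -- box refinement of {Zᶜ, Nᶜ}
  obtain ⟨W₁, hW₁cov, hW₁prop⟩ := boxRef ({Zᶜ, Nᶜ} : Finset (Set (X × X)))
    (by
      intro o ho
      simp only [Finset.mem_insert, Finset.mem_singleton] at ho
      rcases ho with rfl | rfl
      exacts [hZc.isOpen_compl, hNc.isOpen_compl])
    (by
      intro z
      by_cases hz : z ∈ Z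
      · refine ⟨Nᶜ, by simp, ?_⟩
        intro hzN
        have : z ∈ N ∩ Z := ⟨hzN, hz⟩
        rw [hNZ] at this
        exact this
      · exact ⟨Zᶜ, by simp, hz⟩)
  set V' := inter2 V W₁ with hV'
  have hV'cov : IsCov V' := inter2_isCov hV hW₁cov
  set S : Finset (Set X × Set X) :=
    (V' ×ˢ V').filter (fun q => ((q.1 ×ˢ q.2) ∩ Z).Nonempty) with hS
  have hSmem : ∀ q ∈ S, q.1 ∈ V' ∧ q.2 ∈ V' ∧ ((q.1 ×ˢ q.2) ∩ Z).Nonempty := by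
    intro q hq
    simp only [hS, Finset.mem_filter, Finset.mem_product] at hq
    exact ⟨hq.1.1, hq.1.2, hq.2⟩
  have hSin : ∀ q : Set X × Set X, q.1 ∈ V' → q.2 ∈ V' →
      ((q.1 ×ˢ q.2) ∩ Z).Nonempty → q ∈ S := by
    intro q h1' h2' h3'
    simp only [hS, Finset.mem_filter, Finset.mem_product]
    exact ⟨⟨h1', h2'⟩, h3'⟩
  -- reachability
  have hreach : ∀ q ∈ S, ∀ r ∈ S,
      Relation.ReflTransGen (fun a b => a ∈ S ∧ b ∈ S ∧ Adj a b) q r := by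
    intro q hq r hr
    by_contra hnr
    set Rel := fun a b : Set X × Set X => a ∈ S ∧ b ∈ S ∧ Adj a b with hRel
    set R : Finset (Set X × Set X) := S.filter (Relation.ReflTransGen Rel q) with hR
    have hqR : q ∈ R := Finset.mem_filter.2 ⟨hq, Relation.ReflTransGen.refl⟩
    have hrR : r ∉ R := fun h => hnr (Finset.mem_filter.1 h).2
    set O₁ : Set (X × X) := ⋃ a ∈ R, a.1 ×ˢ a.2 with hO₁
    set O₂ : Set (X × X) := ⋃ a ∈ S \ R, a.1 ×ˢ a.2 with hO₂
    have hopen : ∀ T : Finset (Set X × Set X), (∀ a ∈ T, a ∈ S) →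
        IsOpen (⋃ a ∈ T, (a.1 ×ˢ a.2 : Set (X × X))) := by
      intro T hT
      refine isOpen_biUnion fun a ha => ?_
      obtain ⟨ha1, ha2, _⟩ := hSmem a (hT a ha)
      exact (hV'cov.1 _ ha1).prod (hV'cov.1 _ ha2)
    have hZsub : Z ⊆ O₁ ∪ O₂ := by
      intro z hz
      obtain ⟨a, haV, hza⟩ := hV'cov.2 z.1
      obtain ⟨b, hbV, hzb⟩ := hV'cov.2 z.2
      have habS : (a, b) ∈ S := hSin (a, b) haV hbV ⟨z, ⟨hza, hzb⟩, hz⟩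
      by_cases hab : (a, b) ∈ R
      · exact Or.inl (mem_iUnion₂.2 ⟨(a, b), hab, hza, hzb⟩)
      · exact Or.inr (mem_iUnion₂.2 ⟨(a, b), Finset.mem_sdiff.2 ⟨habS, hab⟩, hza, hzb⟩)
    have hne1 : (Z ∩ O₁).Nonempty := by
      obtain ⟨z, hzq, hzZ⟩ := (hSmem q hq).2.2
      exact ⟨z, hzZ, mem_iUnion₂.2 ⟨q, hqR, hzq⟩⟩
    have hne2 : (Z ∩ O₂).Nonempty := by
      obtain ⟨z, hzr, hzZ⟩ := (hSmem r hr).2.2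
      exact ⟨z, hzZ, mem_iUnion₂.2 ⟨r, Finset.mem_sdiff.2 ⟨hr, hrR⟩, hzr⟩⟩
    obtain ⟨z, hzZ, hz1, hz2⟩ := hZconn.2 O₁ O₂
      (hopen R fun a ha => (Finset.mem_filter.1 ha).1)
      (hopen (S \ R) fun a ha => (Finset.mem_sdiff.1 ha).1)
      hZsub hne1 hne2
    simp only [hO₁, mem_iUnion] at hz1
    simp only [hO₂, mem_iUnion] at hz2
    obtain ⟨a, haR, hza⟩ := hz1
    obtain ⟨b, hbSR, hzb⟩ := hz2
    have hbR : b ∈ R := by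
      have hchain := (Finset.mem_filter.1 haR).2
      refine Finset.mem_filter.2 ⟨(Finset.mem_sdiff.1 hbSR).1, hchain.tail ?_⟩
      exact ⟨(Finset.mem_filter.1 haR).1, (Finset.mem_sdiff.1 hbSR).1,
        ⟨z.1, hza.1, hzb.1⟩, ⟨z.2, hza.2, hzb.2⟩⟩
    exact (Finset.mem_sdiff.1 hbSR).2 hbR
  refine ⟨V', hV'cov, inter2_ref_left _ _, S, ?_, ?_, ?_, ?_, hreach⟩
  · intro q hq
    obtain ⟨h1', h2', ⟨z, hzq, _⟩⟩ := hSmem q hq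
    exact ⟨h1', h2', ⟨z.1, hzq.1⟩, ⟨z.2, hzq.2⟩⟩
  · intro x
    obtain ⟨y, hxy⟩ := h1 x
    obtain ⟨a, haV, hxa⟩ := hV'cov.2 x
    obtain ⟨b, hbV, hyb⟩ := hV'cov.2 y
    exact ⟨(a, b), hSin (a, b) haV hbV ⟨(x, y), ⟨hxa, hyb⟩, hxy⟩, hxa⟩
  · intro y
    obtain ⟨x, hxy⟩ := h2 y
    obtain ⟨a, haV, hxa⟩ := hV'cov.2 x
    obtain ⟨b, hbV, hyb⟩ := hV'cov.2 y
    exact ⟨(a, b), hSin (a, b) haV hbV ⟨(x, y), ⟨hxa, hyb⟩, hxy⟩, hyb⟩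
  · -- separation
    intro q hq w hw
    obtain ⟨h1', h2', ⟨z, hzq, hzZ⟩⟩ := hSmem q hq
    obtain ⟨a₁, ha₁, hqa₁⟩ := inter2_ref_right V W₁ q.1 h1'
    obtain ⟨a₂, ha₂, hqa₂⟩ := inter2_ref_right V W₁ q.2 h2'
    obtain ⟨o, ho, hsub⟩ := hW₁prop a₁ ha₁ a₂ ha₂
    simp only [Finset.mem_insert, Finset.mem_singleton] at ho
    have hbox : closure q.1 ×ˢ closure q.2 ⊆ closure a₁ ×ˢ closure a₂ :=
      Set.prod_mono (closure_mono hqa₁) (closure_mono hqa₂)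
    rcases ho with rfl | rfl
    · exfalso
      exact hsub (hbox ⟨subset_closure hzq.1, subset_closure hzq.2⟩) hzZ
    · by_contra hcon
      push_neg at hcon
      obtain ⟨hne1, hne2⟩ := hcon
      obtain ⟨s₁, hs₁⟩ := hne1
      obtain ⟨s₂, hs₂⟩ := hne2
      have : ((s₁, s₂) : X × X) ∈ N :=
        mem_iUnion₂.2 ⟨w, hw, subset_closure hs₁.2, subset_closure hs₂.2⟩
      exact hsub (hbox ⟨hs₁.1, hs₂.1⟩) this
/-! ### the hard direction: building a diagonal-avoiding continuum from patterns -/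

theorem lemmaA [CompactSpace X] [T2Space X] [Nonempty X]
    (U₀ : Finset (Set X)) (hU₀ : IsCov U₀)
    (H : ∀ V : Finset (Set X), IsCov V →
      ∃ V', IsCov V' ∧ Ref V' V ∧ ∃ S, Patt U₀ V' S) :
    ∃ Z : Set (X × X), IsClosed Z ∧ IsConnected Z ∧
      (∀ x : X, ∃ y, (x, y) ∈ Z) ∧ (∀ y : X, ∃ x, (x, y) ∈ Z) ∧
      ∀ x : X, (x, x) ∉ Z := by
  classical
  set D := {V : Finset (Set X) // IsCov V} with hD
  haveI : Nonempty D := ⟨⟨{Set.univ}, ⟨by simp, fun x => ⟨Set.univ, by simp⟩⟩⟩⟩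
  choose V' hV'cov hV'ref Spat hSpat using fun V : D => H V.1 V.2
  set K : D → Set (X × X) := fun V => Kset (Spat V) with hK
  set R : D → Set D := fun W => {V | Ref V.1 W.1} with hR
  have hRdir : Directed (fun (x1 x2 : Filter D) => x1 ≥ x2) (fun W => Filter.principal (R W)) := by
    intro W₁ W₂
    refine ⟨⟨inter2 W₁.1 W₂.1, inter2_isCov W₁.2 W₂.2⟩, ?_, ?_⟩
    · show 𝓟 _ ≤ 𝓟 _
      rw [Filter.le_principal_iff, Filter.mem_principal]
      intro V hV
      exact Ref.trans hV (inter2_ref_left _ _)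
    · show 𝓟 _ ≤ 𝓟 _
      rw [Filter.le_principal_iff, Filter.mem_principal]
      intro V hV
      exact Ref.trans hV (inter2_ref_right _ _)
  have hRne : ∀ W : D, (Filter.principal (R W)).NeBot := by
    intro W
    rw [Filter.principal_neBot_iff]
    exact ⟨W, Ref.refl W.1⟩
  haveI hF₀ : (⨅ W : D, Filter.principal (R W)).NeBot := iInf_neBot_of_directed hRdir hRne
  set 𝔉 : Ultrafilter D := Ultrafilter.of (⨅ W : D, Filter.principal (R W)) with h𝔉
  have hmemR : ∀ W : D, R W ∈ 𝔉 := by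
    intro W
    have h1 : R W ∈ ⨅ W : D, Filter.principal (R W) :=
      Filter.le_principal_iff.1 (iInf_le _ W)
    exact Filter.le_def.1 (Ultrafilter.of_le _) _ h1
  set ι := {F : Set D // F ∈ 𝔉} with hι
  haveI : Nonempty ι := ⟨⟨Set.univ, Filter.univ_mem⟩⟩
  set T : ι → Set (X × X) := fun F => closure (⋃ V ∈ F.1, K V) with hT
  have hTclosed : ∀ F, IsClosed (T F) := fun F => isClosed_closure
  have hTcompact : ∀ F, IsCompact (T F) := fun F => (hTclosed F).isCompact
  have hTdir : Directed (fun x1 x2 => x1 ⊇ x2) T := by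
    intro F₁ F₂
    refine ⟨⟨F₁.1 ∩ F₂.1, Filter.inter_mem F₁.2 F₂.2⟩, ?_, ?_⟩
    · exact closure_mono (iUnion₂_mono' fun V hV => ⟨V, hV.1, Subset.rfl⟩)
    · exact closure_mono (iUnion₂_mono' fun V hV => ⟨V, hV.2, Subset.rfl⟩)
  have hKne : ∀ V : D, (K V).Nonempty := by
    intro V
    obtain ⟨x⟩ := ‹Nonempty X›
    obtain ⟨y, hy⟩ := Kset_proj_fst (hSpat V) x
    exact ⟨(x, y), hy⟩
  have hTne : ∀ F, (T F).Nonempty := by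
    intro F
    obtain ⟨V, hV⟩ := Ultrafilter.nonempty_of_mem F.2
    obtain ⟨z, hz⟩ := hKne V
    exact ⟨z, subset_closure (mem_iUnion₂.2 ⟨V, hV, hz⟩)⟩
  set KS := ⋂ F : ι, T F with hKS
  have hKSclosed : IsClosed KS := isClosed_iInter fun F => hTclosed F
  have hKSsub : ∀ F : ι, KS ⊆ T F := fun F => iInter_subset T F
  -- projections
  have hproj1 : ∀ x : X, ∃ y, (x, y) ∈ KS := by
    intro x
    set fib : Set (X × X) := Prod.fst ⁻¹' {x} with hfib
    have hfibc : IsClosed fib := isClosed_singleton.preimage continuous_fst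
    set A : ι → Set (X × X) := fun F => closure (⋃ V ∈ F.1, (K V ∩ fib)) with hA
    have hAne : ∀ F, (A F).Nonempty := by
      intro F
      obtain ⟨V, hV⟩ := Ultrafilter.nonempty_of_mem F.2
      obtain ⟨y, hy⟩ := Kset_proj_fst (hSpat V) x
      exact ⟨(x, y), subset_closure (mem_iUnion₂.2 ⟨V, hV, hy, rfl⟩)⟩
    have hAdir : Directed (fun x1 x2 => x1 ⊇ x2) A := by
      intro F₁ F₂
      refine ⟨⟨F₁.1 ∩ F₂.1, Filter.inter_mem F₁.2 F₂.2⟩, ?_, ?_⟩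
      · exact closure_mono (iUnion₂_mono' fun V hV => ⟨V, hV.1, Subset.rfl⟩)
      · exact closure_mono (iUnion₂_mono' fun V hV => ⟨V, hV.2, Subset.rfl⟩)
    obtain ⟨z, hz⟩ := IsCompact.nonempty_iInter_of_directed_nonempty_isCompact_isClosed A
      hAdir hAne (fun F => isClosed_closure.isCompact) (fun F => isClosed_closure)
    simp only [mem_iInter] at hz
    have hzKS : z ∈ KS := by
      refine mem_iInter.2 fun F => ?_
      exact closure_mono (iUnion₂_mono fun V hV => inter_subset_left) (hz F)
    have hzfib : z ∈ fib := by
      have h1 : A ⟨Set.univ, Filter.univ_mem⟩ ⊆ fib := by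
        refine (closure_minimal ?_ hfibc)
        exact iUnion₂_subset fun V _ => inter_subset_right
      exact h1 (hz _)
    refine ⟨z.2, ?_⟩
    have : z = (x, z.2) := by
      have : z.1 = x := hzfib
      exact Prod.ext this rfl
    rwa [← this]
  have hproj2 : ∀ y : X, ∃ x, (x, y) ∈ KS := by
    intro y
    set fib : Set (X × X) := Prod.snd ⁻¹' {y} with hfib
    have hfibc : IsClosed fib := isClosed_singleton.preimage continuous_snd
    set A : ι → Set (X × X) := fun F => closure (⋃ V ∈ F.1, (K V ∩ fib)) with hA
    have hAne : ∀ F, (A F).Nonempty := by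
      intro F
      obtain ⟨V, hV⟩ := Ultrafilter.nonempty_of_mem F.2
      obtain ⟨x, hx⟩ := Kset_proj_snd (hSpat V) y
      exact ⟨(x, y), subset_closure (mem_iUnion₂.2 ⟨V, hV, hx, rfl⟩)⟩
    have hAdir : Directed (fun x1 x2 => x1 ⊇ x2) A := by
      intro F₁ F₂
      refine ⟨⟨F₁.1 ∩ F₂.1, Filter.inter_mem F₁.2 F₂.2⟩, ?_, ?_⟩
      · exact closure_mono (iUnion₂_mono' fun V hV => ⟨V, hV.1, Subset.rfl⟩)
      · exact closure_mono (iUnion₂_mono' fun V hV => ⟨V, hV.2, Subset.rfl⟩)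
    obtain ⟨z, hz⟩ := IsCompact.nonempty_iInter_of_directed_nonempty_isCompact_isClosed A
      hAdir hAne (fun F => isClosed_closure.isCompact) (fun F => isClosed_closure)
    simp only [mem_iInter] at hz
    have hzKS : z ∈ KS := by
      refine mem_iInter.2 fun F => ?_
      exact closure_mono (iUnion₂_mono fun V hV => inter_subset_left) (hz F)
    have hzfib : z ∈ fib := by
      have h1 : A ⟨Set.univ, Filter.univ_mem⟩ ⊆ fib := by
        refine (closure_minimal ?_ hfibc)
        exact iUnion₂_subset fun V _ => inter_subset_right
      exact h1 (hz _)
    refine ⟨z.1, ?_⟩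
    have : z = (z.1, y) := by
      have : z.2 = y := hzfib
      exact Prod.ext rfl this
    rwa [← this]
  -- avoids the diagonal
  have hdiag : ∀ x : X, (x, x) ∉ KS := by
    intro x hx
    set C₀ : Set (X × X) := ⋃ w ∈ U₀, w ×ˢ w with hC₀
    have hC₀open : IsOpen C₀ := isOpen_biUnion fun w hw => (hU₀.1 w hw).prod (hU₀.1 w hw)
    have hxC₀ : (x, x) ∈ C₀ := by
      obtain ⟨w, hw, hxw⟩ := hU₀.2 x
      exact mem_iUnion₂.2 ⟨w, hw, hxw, hxw⟩
    have hsubC : KS ⊆ C₀ᶜ := by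
      refine (hKSsub ⟨Set.univ, Filter.univ_mem⟩).trans ?_
      refine closure_minimal ?_ hC₀open.isClosed_compl
      exact iUnion₂_subset fun V _ => Kset_disjoint_diag (hSpat V)
    exact hsubC hx hxC₀
  -- preconnectedness
  have hpre : IsPreconnected KS := by
    intro u v hu hv hsub hne1 hne2
    by_contra hcon
    have hempty : KS ∩ (u ∩ v) = ∅ := not_nonempty_iff_eq_empty.1 hcon
    have hA'eq : KS ∩ u = KS ∩ vᶜ := by
      ext z
      constructor
      · rintro ⟨hz, hzu⟩
        refine ⟨hz, fun hzv => ?_⟩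
        have : z ∈ KS ∩ (u ∩ v) := ⟨hz, hzu, hzv⟩
        simp [hempty] at this
      · rintro ⟨hz, hznv⟩
        rcases hsub hz with h | h
        · exact ⟨hz, h⟩
        · exact absurd h hznv
    have hB'eq : KS ∩ v = KS ∩ uᶜ := by
      ext z
      constructor
      · rintro ⟨hz, hzv⟩
        refine ⟨hz, fun hzu => ?_⟩
        have : z ∈ KS ∩ (u ∩ v) := ⟨hz, hzu, hzv⟩
        simp [hempty] at this
      · rintro ⟨hz, hznu⟩
        rcases hsub hz with h | h
        · exact absurd h hznu
        · exact ⟨hz, h⟩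
    have hA'c : IsClosed (KS ∩ u) := hA'eq ▸ hKSclosed.inter hv.isClosed_compl
    have hB'c : IsClosed (KS ∩ v) := hB'eq ▸ hKSclosed.inter hu.isClosed_compl
    have hdisjAB : Disjoint (KS ∩ u) (KS ∩ v) := by
      rw [Set.disjoint_left]
      rintro z ⟨hz, hzu⟩ ⟨_, hzv⟩
      have : z ∈ KS ∩ (u ∩ v) := ⟨hz, hzu, hzv⟩
      simp [hempty] at this
    obtain ⟨UA, VB, hUAo, hVBo, hAU, hBV, hUV⟩ := NormalSpace.normal _ _ hA'c hB'c hdisjAB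
    have hKUV : KS ⊆ UA ∪ VB := by
      intro z hz
      rcases hsub hz with h | h
      · exact Or.inl (hAU ⟨hz, h⟩)
      · exact Or.inr (hBV ⟨hz, h⟩)
    have hexF : ∃ F : ι, T F ⊆ UA ∪ VB := by
      by_contra hno
      push_neg at hno
      set B : ι → Set (X × X) := fun F => T F ∩ (UA ∪ VB)ᶜ with hB
      have hBne : ∀ F, (B F).Nonempty := by
        intro F
        obtain ⟨z, hz1, hz2⟩ := not_subset.1 (hno F)
        exact ⟨z, hz1, hz2⟩
      have hBdir : Directed (fun x1 x2 => x1 ⊇ x2) B := by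
        intro F₁ F₂
        obtain ⟨F₃, h1, h2⟩ := hTdir F₁ F₂
        exact ⟨F₃, inter_subset_inter_left _ h1, inter_subset_inter_left _ h2⟩
      have hBclosed : ∀ F, IsClosed (B F) :=
        fun F => (hTclosed F).inter (hUAo.union hVBo).isClosed_compl
      obtain ⟨z, hz⟩ := IsCompact.nonempty_iInter_of_directed_nonempty_isCompact_isClosed B
        hBdir hBne (fun F => (hBclosed F).isCompact) hBclosed
      simp only [mem_iInter] at hz
      have hzKS : z ∈ KS := mem_iInter.2 fun F => (hz F).1
      exact (hz ⟨Set.univ, Filter.univ_mem⟩).2 (hKUV hzKS)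
    obtain ⟨F₀, hF₀⟩ := hexF
    set O' : Finset (Set (X × X)) := {UA, VB, (T F₀)ᶜ} with hO'
    obtain ⟨Wstar, hWstarcov, hWstarprop⟩ := boxRef O'
      (by
        intro o ho
        simp only [hO', Finset.mem_insert, Finset.mem_singleton] at ho
        rcases ho with rfl | rfl | rfl
        exacts [hUAo, hVBo, (hTclosed F₀).isOpen_compl])
      (by
        intro z
        by_cases hz : z ∈ T F₀
        · rcases hF₀ hz with h | h
          · exact ⟨UA, by simp [hO'], h⟩
          · exact ⟨VB, by simp [hO'], h⟩
        · exact ⟨(T F₀)ᶜ, by simp [hO'], hz⟩)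
    set Wd : D := ⟨Wstar, hWstarcov⟩ with hWd
    set F' : Set D := F₀.1 ∩ R Wd with hF'
    have hF'mem : F' ∈ 𝔉 := Filter.inter_mem F₀.2 (hmemR Wd)
    have claim : ∀ V : D, V ∈ F' → K V ⊆ UA ∨ K V ⊆ VB := by
      intro V hV
      have hKT : K V ⊆ T F₀ := fun z hz => subset_closure (mem_iUnion₂.2 ⟨V, hV.1, hz⟩)
      have hrefW : Ref (V' V) Wstar := (hV'ref V).trans hV.2
      have hboxes : ∀ p ∈ Spat V, box p ⊆ UA ∨ box p ⊆ VB := by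
        intro p hp
        obtain ⟨h1, h2, hne1', hne2'⟩ := (hSpat V).1 p hp
        obtain ⟨w₁, hw₁, hpw₁⟩ := hrefW p.1 h1
        obtain ⟨w₂, hw₂, hpw₂⟩ := hrefW p.2 h2
        obtain ⟨o, ho, hsub'⟩ := hWstarprop w₁ hw₁ w₂ hw₂
        have hboxsub : box p ⊆ o :=
          (Set.prod_mono (closure_mono hpw₁) (closure_mono hpw₂)).trans hsub'
        simp only [hO', Finset.mem_insert, Finset.mem_singleton] at ho
        rcases ho with rfl | rfl | rfl
        · exact Or.inl hboxsub
        · exact Or.inr hboxsub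
        · exfalso
          obtain ⟨x0, hx0⟩ := hne1'
          obtain ⟨y0, hy0⟩ := hne2'
          have hxyb : (x0, y0) ∈ box p := ⟨subset_closure hx0, subset_closure hy0⟩
          have hKV : (x0, y0) ∈ K V := mem_iUnion₂.2 ⟨p, hp, hxyb⟩
          exact (hboxsub hxyb) (hKT hKV)
      obtain ⟨x⟩ := ‹Nonempty X›
      obtain ⟨p₀, hp₀, _⟩ := (hSpat V).2.1 x
      rcases hboxes p₀ hp₀ with h | h
      · exact Or.inl (Kset_side (hSpat V) hUV hboxes hp₀ h)
      · exact Or.inr (Kset_side (hSpat V) hUV.symm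
          (fun p hp => (hboxes p hp).symm) hp₀ h)
    set FU : Set D := F' ∩ {V | K V ⊆ UA} with hFU
    set FV : Set D := F' ∩ {V | K V ⊆ VB} with hFV
    have hFUV : FU ∪ FV ∈ 𝔉 := by
      refine Filter.mem_of_superset hF'mem ?_
      intro V hV
      rcases claim V hV with h | h
      · exact Or.inl ⟨hV, h⟩
      · exact Or.inr ⟨hV, h⟩
    have hclUA : Disjoint (closure UA) VB := hUV.closure_left hVBo
    have hclVB : Disjoint (closure VB) UA := hUV.symm.closure_left hUAo
    rcases Ultrafilter.union_mem_iff.1 hFUV with hm | hm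
    · have hKSA : KS ⊆ closure UA := by
        refine (hKSsub ⟨FU, hm⟩).trans ?_
        exact closure_mono (iUnion₂_subset fun V hV => hV.2)
      obtain ⟨z, hz, hzv⟩ := hne2
      have hzVB : z ∈ VB := hBV ⟨hz, hzv⟩
      exact Set.disjoint_left.1 hclUA (hKSA hz) hzVB
    · have hKSB : KS ⊆ closure VB := by
        refine (hKSsub ⟨FV, hm⟩).trans ?_
        exact closure_mono (iUnion₂_subset fun V hV => hV.2)
      obtain ⟨z, hz, hzu⟩ := hne1
      have hzUA : z ∈ UA := hAU ⟨hz, hzu⟩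
      exact Set.disjoint_left.1 hclVB (hKSB hz) hzUA
  obtain ⟨x⟩ := ‹Nonempty X›
  obtain ⟨y, hy⟩ := hproj1 x
  exact ⟨KS, hKSclosed, ⟨⟨(x, y), hy⟩, hpre⟩, hproj1, hproj2, hdiag⟩

/-! ### rational cylinder boxes in `ℕ → ℝ` -/

def boxSet (b : List (ℕ × ℚ × ℚ)) : Set (ℕ → ℝ) :=
  {y | ∀ c ∈ b, (c.2.1 : ℝ) < y c.1 ∧ y c.1 < (c.2.2 : ℝ)}

theorem boxSet_isOpen (b : List (ℕ × ℚ × ℚ)) : IsOpen (boxSet b) := by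
  have : boxSet b = ⋂ c ∈ b.toFinset, (fun y : ℕ → ℝ => y c.1) ⁻¹' Ioo (c.2.1 : ℝ) (c.2.2 : ℝ) := by
    ext y
    simp [boxSet, mem_Ioo]
  rw [this]
  exact isOpen_biInter_finset fun c _ => isOpen_Ioo.preimage (continuous_apply c.1)

theorem rat_squeeze {s : Set ℝ} (hs : IsOpen s) {x : ℝ} (hx : x ∈ s) :
    ∃ q r : ℚ, (q : ℝ) < x ∧ x < (r : ℝ) ∧ Ioo (q : ℝ) (r : ℝ) ⊆ s := by
  obtain ⟨ε, hε, hball⟩ := Metric.isOpen_iff.1 hs x hx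
  obtain ⟨q, hq1, hq2⟩ := exists_rat_btwn (by linarith : x - ε < x)
  obtain ⟨r, hr1, hr2⟩ := exists_rat_btwn (by linarith : x < x + ε)
  refine ⟨q, r, hq2, hr1, ?_⟩
  intro t ht
  apply hball
  rw [Real.ball_eq_Ioo]
  exact ⟨lt_trans hq1 ht.1, lt_trans ht.2 hr2⟩

theorem boxSet_basis {O : Set (ℕ → ℝ)} (hO : IsOpen O) {y : ℕ → ℝ} (hy : y ∈ O) :
    ∃ b : List (ℕ × ℚ × ℚ), y ∈ boxSet b ∧ boxSet b ⊆ O := by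
  obtain ⟨I, u, hu, hsub⟩ := isOpen_pi_iff.1 hO y hy
  have hex : ∀ i : ℕ, ∃ q r : ℚ, i ∈ I →
      ((q : ℝ) < y i ∧ y i < (r : ℝ) ∧ Ioo (q : ℝ) (r : ℝ) ⊆ u i) := by
    intro i
    by_cases hi : i ∈ I
    · obtain ⟨q, r, h1, h2, h3⟩ := rat_squeeze (hu i hi).1 (hu i hi).2
      exact ⟨q, r, fun _ => ⟨h1, h2, h3⟩⟩
    · exact ⟨0, 0, fun h => absurd h hi⟩
  choose q r hqr using hex
  refine ⟨I.toList.map (fun i => (i, q i, r i)), ?_, ?_⟩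
  · intro c hc
    simp only [List.mem_map, Finset.mem_toList] at hc
    obtain ⟨i, hi, rfl⟩ := hc
    exact ⟨(hqr i hi).1, (hqr i hi).2.1⟩
  · intro z hz
    apply hsub
    rw [Set.mem_pi]
    intro i hi
    have hmem : (i, q i, r i) ∈ I.toList.map (fun i => (i, q i, r i)) :=
      List.mem_map_of_mem (Finset.mem_toList.2 hi)
    have := hz _ hmem
    exact (hqr i hi).2.2 ⟨this.1, this.2⟩

/-! ### the recursive coordinate construction -/

abbrev Code := ℕ ⊕ (List (List (ℕ × ℚ × ℚ)) × ℕ × ℕ)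

def cEnc : Code ≃ ℕ := Denumerable.eqv Code

def G (bg : ℕ → C(X, ℝ)) (rg : Finset (Set X) → ℕ → C(X, ℝ)) : ℕ → C(X, ℝ) := fun n =>
  match cEnc.symm n with
  | Sum.inl k => bg k
  | Sum.inr (B, j, _) =>
    let W : Finset (Set X) := B.toFinset.image (fun b =>
      {x | ∀ c ∈ b, ∃ _ : c.1 < n,
        (c.2.1 : ℝ) < G bg rg c.1 x ∧ G bg rg c.1 x < (c.2.2 : ℝ)})
    if IsCov W then rg W j else 0
  termination_by n => n
  decreasing_by all_goals assumption

/-- honest pullback family -/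
def pullB (bg : ℕ → C(X, ℝ)) (rg : Finset (Set X) → ℕ → C(X, ℝ))
    (B : List (List (ℕ × ℚ × ℚ))) : Finset (Set X) :=
  B.toFinset.image (fun b =>
    {x | ∀ c ∈ b, (c.2.1 : ℝ) < G bg rg c.1 x ∧ G bg rg c.1 x < (c.2.2 : ℝ)})

theorem G_base (bg : ℕ → C(X, ℝ)) (rg : Finset (Set X) → ℕ → C(X, ℝ)) (k : ℕ) :
    G bg rg (cEnc (Sum.inl k)) = bg k := by
  conv_lhs => rw [G, Equiv.symm_apply_apply]

theorem G_resp (bg : ℕ → C(X, ℝ)) (rg : Finset (Set X) → ℕ → C(X, ℝ))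
    (B : List (List (ℕ × ℚ × ℚ))) (j pad : ℕ)
    (hcoord : ∀ c ∈ B.flatten, c.1 < cEnc (Sum.inr (B, j, pad)))
    (hcov : IsCov (pullB bg rg B)) :
    G bg rg (cEnc (Sum.inr (B, j, pad))) = rg (pullB bg rg B) j := by
  conv_lhs => rw [G, Equiv.symm_apply_apply]
  have hW : (B.toFinset.image (fun b =>
      {x | ∀ c ∈ b, ∃ _ : c.1 < cEnc (Sum.inr (B, j, pad)),
        (c.2.1 : ℝ) < G bg rg c.1 x ∧ G bg rg c.1 x < (c.2.2 : ℝ)})) = pullB bg rg B := by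
    unfold pullB
    refine Finset.image_congr ?_
    intro b hb
    have hb' : b ∈ B := by simpa using hb
    ext x
    simp only [mem_setOf_eq]
    constructor
    · intro h c hc
      obtain ⟨_, h1, h2⟩ := h c hc
      exact ⟨h1, h2⟩
    · intro h c hc
      exact ⟨hcoord c (List.mem_flatten.2 ⟨b, hb', hc⟩), (h c hc).1, (h c hc).2⟩
  show (if IsCov (Finset.image _ B.toFinset) then
      rg (Finset.image (fun b =>
        {x | ∀ c ∈ b, ∃ _ : c.1 < cEnc (Sum.inr (B, j, pad)),
          (c.2.1 : ℝ) < G bg rg c.1 x ∧ G bg rg c.1 x < (c.2.2 : ℝ)}) B.toFinset) j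
      else 0) = rg (pullB bg rg B) j
  rw [hW, if_pos hcov]

/-- codes above any bound exist -/
theorem exists_pad (B : List (List (ℕ × ℚ × ℚ))) (j : ℕ) :
    ∃ pad : ℕ, ∀ c ∈ B.flatten, c.1 < cEnc (Sum.inr (B, j, pad)) := by
  classical
  have hinj : Function.Injective (fun pad : ℕ => cEnc (Sum.inr (B, j, pad))) := by
    intro p₁ p₂ h
    have := cEnc.injective h
    simpa using this
  set N : ℕ := (B.flatten.map Prod.fst).sum + 1 with hN
  have hbound : ∀ c ∈ B.flatten, c.1 < N := by
    intro c hc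
    have : c.1 ≤ (B.flatten.map Prod.fst).sum :=
      List.single_le_sum (fun _ _ => Nat.zero_le _) _ (List.mem_map_of_mem hc)
    omega
  by_contra hno
  push_neg at hno
  have hlt : ∀ pad : ℕ, cEnc (Sum.inr (B, j, pad)) < N := by
    intro pad
    obtain ⟨c, hc, hle⟩ := hno pad
    exact lt_of_le_of_lt hle (hbound c hc)
  have : ∃ p₁ p₂ : ℕ, p₁ ≠ p₂ ∧
      (⟨cEnc (Sum.inr (B, j, p₁)), hlt p₁⟩ : Fin N) = ⟨cEnc (Sum.inr (B, j, p₂)), hlt p₂⟩ :=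
    Finite.exists_ne_map_eq_of_infinite _
  obtain ⟨p₁, p₂, hne, heq⟩ := this
  exact hne (hinj (by simpa [Fin.ext_iff] using heq))

/-! ### Urysohn packaging for finite covers -/

theorem ury [CompactSpace X] [T2Space X] (V : Finset (Set X)) :
    ∃ (k : ℕ) (g : ℕ → C(X, ℝ)) (v : ℕ → Set X), IsCov V →
      ((∀ j, j < k → v j ∈ V ∧ {x | 0 < g j x} ⊆ v j) ∧
        (∀ x : X, ∃ j, j < k ∧ 0 < g j x)) := by
  classical
  by_cases hV : IsCov V
  swap
  · exact ⟨0, fun _ => 0, fun _ => ∅, fun h => absurd h hV⟩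
  set ι := {u : Set X // u ∈ V} with hι
  set u : ι → Set X := Subtype.val with hu
  have huo : ∀ i, IsOpen (u i) := fun i => hV.1 i.1 i.2
  have huf : ∀ x : X, {i : ι | x ∈ u i}.Finite := fun x => Set.toFinite _
  have huU : ⋃ i, u i = univ := by
    refine eq_univ_of_forall fun x => ?_
    obtain ⟨w, hw, hxw⟩ := hV.2 x
    exact mem_iUnion.2 ⟨⟨w, hw⟩, hxw⟩
  obtain ⟨v', hv'U, hv'o, hv'cl⟩ := exists_iUnion_eq_closure_subset huo huf huU
  have hury : ∀ i : ι, ∃ f : C(X, ℝ),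
      EqOn f 0 (u i)ᶜ ∧ EqOn f 1 (closure (v' i)) := by
    intro i
    have hdisj : Disjoint ((u i)ᶜ) (closure (v' i)) := by
      rw [Set.disjoint_left]
      intro a ha ha'
      exact ha (hv'cl i ha')
    obtain ⟨f, hf0, hf1, _⟩ := exists_continuous_zero_one_of_isClosed
      (huo i).isClosed_compl isClosed_closure hdisj
    exact ⟨f, hf0, hf1⟩
  choose f hf0 hf1 using hury
  set L := V.toList with hL
  refine ⟨L.length,
    fun j => if h : j < L.length then f ⟨L.get ⟨j, h⟩, Finset.mem_toList.1 (L.get_mem _)⟩ else 0,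
    fun j => if h : j < L.length then L.get ⟨j, h⟩ else ∅, fun _ => ⟨?_, ?_⟩⟩
  · intro j hj
    constructor
    · simp only [dif_pos hj]
      exact Finset.mem_toList.1 (L.get_mem _)
    · intro x hx
      simp only [mem_setOf_eq, dif_pos hj] at hx
      simp only [dif_pos hj]
      by_contra hxu
      have : f ⟨L.get ⟨j, hj⟩, Finset.mem_toList.1 (L.get_mem _)⟩ x = 0 := hf0 _ hxu
      rw [this] at hx
      exact lt_irrefl 0 hx
  · intro x
    have hx : x ∈ ⋃ i, v' i := hv'U ▸ mem_univ x
    obtain ⟨i, hi⟩ := mem_iUnion.1 hx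
    obtain ⟨⟨j, hj⟩, hget⟩ := List.mem_iff_get.1 (Finset.mem_toList.2 i.2)
    refine ⟨j, hj, ?_⟩
    have hieq : (⟨L.get ⟨j, hj⟩, Finset.mem_toList.1 (L.get_mem _)⟩ : ι) = i :=
      Subtype.ext hget
    have : ((fun j => if h : j < L.length then
        f ⟨L.get ⟨j, h⟩, Finset.mem_toList.1 (L.get_mem _)⟩ else 0) j) x
        = f i x := by
      simp only [dif_pos hj, hieq]
      rw [dif_pos (show j < L.length from hj)]
    rw [this, hf1 i (subset_closure hi)]
    exact zero_lt_one

end SpanProof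

attribute [local instance 2000] Classical.propDecidable

open SpanProof in
theorem nonmetric_to_metric_counterexample_10 :
    (∃ (X : Type u) (_ : TopologicalSpace X),
      CompactSpace X ∧ T2Space X ∧ ConnectedSpace X ∧ SurjectiveSpanZero X ∧ ¬ Chainable X) →
    ∃ (Y : Type) (_ : TopologicalSpace Y),
      TopologicalSpace.MetrizableSpace Y ∧
      CompactSpace Y ∧ T2Space Y ∧ ConnectedSpace Y ∧ SurjectiveSpanZero Y ∧ ¬ Chainable Y := by
  classical
  rintro ⟨X, tX, hcomp, ht2, hconn, hssz, hnch⟩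
  haveI : Nonempty X := hconn.toNonempty
  -- no-pattern refinements exist, by `lemmaA` and surjective span zero of X
  have hnopat0 : ∀ U₀ : Finset (Set X), ∃ NPV : Finset (Set X), IsCov U₀ →
      (IsCov NPV ∧ ∀ V', IsCov V' → Ref V' NPV → ∀ S, ¬ Patt U₀ V' S) := by
    intro U₀
    by_cases hU₀ : IsCov U₀
    swap
    · exact ⟨∅, fun h => absurd h hU₀⟩
    by_contra hno
    have H : ∀ V : Finset (Set X), IsCov V →
        ∃ V', IsCov V' ∧ Ref V' V ∧ ∃ S, Patt U₀ V' S := by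
      intro V hV
      by_contra hP
      push_neg at hP
      exact hno ⟨V, fun _ => ⟨hV, hP⟩⟩
    obtain ⟨Z, hZc, hZconn, hp1, hp2, hd⟩ := lemmaA U₀ hU₀ H
    have hfst : Prod.fst '' Z = Set.univ := by
      refine Set.eq_univ_of_forall fun x => ?_
      obtain ⟨y, hy⟩ := hp1 x
      exact ⟨(x, y), hy, rfl⟩
    have hsnd : Prod.snd '' Z = Set.univ := by
      refine Set.eq_univ_of_forall fun y => ?_
      obtain ⟨x, hx⟩ := hp2 y
      exact ⟨(x, y), hx, rfl⟩
    obtain ⟨x, hx⟩ := hssz Z hZc hZconn hfst hsnd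
    exact hd x hx
  choose nopat hnopatSpec using hnopat0
  -- Urysohn data for every finite cover
  choose uk ug uv huspec using fun V : Finset (Set X) => ury (X := X) V
  -- the bad cover witnessing non-chainability
  have hbad : ∃ U : Finset (Set X), (∀ u ∈ U, IsOpen u) ∧ ⋃₀ (U : Set (Set X)) = Set.univ ∧
      ¬∃ (n : ℕ) (V : Fin n → Set X),
        (∀ i, IsOpen (V i)) ∧ (⋃ i, V i) = Set.univ ∧
        (∀ i, ∃ u ∈ U, V i ⊆ u) ∧
        ∀ i j : Fin n, (V i ∩ V j).Nonempty ↔ |((i : ℕ) : ℤ) - ((j : ℕ) : ℤ)| ≤ 1 := by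
    by_contra h
    apply hnch
    intro U h1 h2
    by_contra h3
    exact h ⟨U, h1, h2, h3⟩
  obtain ⟨Ubad, hUbadOpen, hUbadCov, hUbadNoChain⟩ := hbad
  have hUbadIsCov : IsCov Ubad := by
    refine ⟨hUbadOpen, fun x => ?_⟩
    have : x ∈ ⋃₀ (Ubad : Set (Set X)) := hUbadCov ▸ Set.mem_univ x
    obtain ⟨u, hu, hxu⟩ := this
    exact ⟨u, hu, hxu⟩
  -- the construction
  set bg : ℕ → C(X, ℝ) := ug Ubad with hbg
  set rg : Finset (Set X) → ℕ → C(X, ℝ) := fun U₀ => ug (nopat U₀) with hrg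
  set fmap : X → (ℕ → ℝ) := fun x n => G bg rg n x with hfmap
  have hfc : Continuous fmap := continuous_pi fun n => (G bg rg n).continuous
  set Yset : Set (ℕ → ℝ) := Set.range fmap with hYset
  set fY : X → ↥Yset := fun x => ⟨fmap x, Set.mem_range_self x⟩ with hfY
  have hfYc : Continuous fY := hfc.subtype_mk _
  have hfYsurj : Function.Surjective fY := by
    rintro ⟨y, x, rfl⟩
    exact ⟨x, rfl⟩
  haveI hYcomp : CompactSpace ↥Yset := isCompact_iff_compactSpace.1 (isCompact_range hfc)
  haveI hYconn : ConnectedSpace ↥Yset := Subtype.connectedSpace (isConnected_range hfc)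
  have hevalc : ∀ n : ℕ, Continuous (fun y : ↥Yset => (y : ℕ → ℝ) n) :=
    fun n => (continuous_apply n).comp continuous_subtype_val
  -- not chainable
  have hnotch : ¬ Chainable ↥Yset := by
    intro hch
    set OY : Finset (Set ↥Yset) := (Finset.range (uk Ubad)).image
      (fun j => {y : ↥Yset | 0 < (y : ℕ → ℝ) (cEnc (Sum.inl j))}) with hOY
    have hOYopen : ∀ o ∈ OY, IsOpen o := by
      intro o ho
      simp only [hOY, Finset.mem_image] at ho
      obtain ⟨j, _, rfl⟩ := ho
      exact isOpen_lt continuous_const (hevalc _)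
    have hkey : ∀ (j : ℕ) (x : X), (fY x : ℕ → ℝ) (cEnc (Sum.inl j)) = ug Ubad j x := by
      intro j x
      show G bg rg (cEnc (Sum.inl j)) x = ug Ubad j x
      rw [G_base]
    have hOYcovU : ⋃₀ (OY : Set (Set ↥Yset)) = Set.univ := by
      refine Set.eq_univ_of_forall fun y => ?_
      obtain ⟨x, rfl⟩ := hfYsurj y
      obtain ⟨j, hj, hpos⟩ := (huspec Ubad hUbadIsCov).2 x
      refine ⟨{y : ↥Yset | 0 < (y : ℕ → ℝ) (cEnc (Sum.inl j))}, ?_, ?_⟩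
      · exact Finset.mem_coe.2 (Finset.mem_image_of_mem _ (Finset.mem_range.2 hj))
      · show 0 < (fY x : ℕ → ℝ) (cEnc (Sum.inl j))
        rw [hkey j x]
        exact hpos
    obtain ⟨n, V, hVopen, hVunion, hVref, hViff⟩ := hch OY hOYopen hOYcovU
    apply hUbadNoChain
    refine ⟨n, fun i => fY ⁻¹' (V i), fun i => (hVopen i).preimage hfYc, ?_, ?_, ?_⟩
    · rw [← Set.preimage_iUnion, hVunion, Set.preimage_univ]
    · intro i
      obtain ⟨o, ho, hVo⟩ := hVref i
      simp only [hOY, Finset.mem_image, Finset.mem_range] at ho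
      obtain ⟨j, hj, rfl⟩ := ho
      refine ⟨uv Ubad j, ((huspec Ubad hUbadIsCov).1 j hj).1, ?_⟩
      intro x hx
      have hx' := hVo hx
      have hpos : 0 < ug Ubad j x := by
        rw [← hkey j x]
        exact hx'
      exact ((huspec Ubad hUbadIsCov).1 j hj).2 hpos
    · intro i j
      rw [← hViff i j]
      constructor
      · rintro ⟨x, hx1, hx2⟩
        exact ⟨fY x, hx1, hx2⟩
      · rintro ⟨y, hy1, hy2⟩
        obtain ⟨x, rfl⟩ := hfYsurj y
        exact ⟨x, hy1, hy2⟩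
  -- surjective span zero
  have hsszY : SurjectiveSpanZero ↥Yset := by
    intro Z hZc hZconn hfst hsnd
    by_contra hnx
    push_neg at hnx
    have h1 : ∀ a : ↥Yset, ∃ b, (a, b) ∈ Z := by
      intro a
      have : a ∈ Prod.fst '' Z := hfst ▸ Set.mem_univ a
      obtain ⟨z, hz, hz1⟩ := this
      exact ⟨z.2, by rwa [show (a, z.2) = z from Prod.ext hz1.symm rfl]⟩
    have h2 : ∀ b : ↥Yset, ∃ a, (a, b) ∈ Z := by
      intro b
      have : b ∈ Prod.snd '' Z := hsnd ▸ Set.mem_univ b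
      obtain ⟨z, hz, hz1⟩ := this
      exact ⟨z.1, by rwa [show (z.1, b) = z from Prod.ext rfl hz1.symm]⟩
    obtain ⟨U₀Y, hU₀Ycov, hBprop⟩ := lemmaB hZc hZconn h1 h2 hnx
    -- refine U₀Y by rational cylinder boxes
    have hbox : ∀ y : ↥Yset, ∃ b : List (ℕ × ℚ × ℚ), (y : ℕ → ℝ) ∈ boxSet b ∧
        ∃ w ∈ U₀Y, (Subtype.val ⁻¹' boxSet b : Set ↥Yset) ⊆ w := by
      intro y
      obtain ⟨w, hw, hyw⟩ := hU₀Ycov.2 y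
      obtain ⟨O, hOopen, hOw⟩ := isOpen_induced_iff.1 (hU₀Ycov.1 w hw)
      have hyO : (y : ℕ → ℝ) ∈ O := by
        rw [← hOw] at hyw
        exact hyw
      obtain ⟨b, hb1, hb2⟩ := boxSet_basis hOopen hyO
      refine ⟨b, hb1, w, hw, ?_⟩
      rw [← hOw]
      exact Set.preimage_mono hb2
    choose bx hbx1 hbx2 using hbox
    obtain ⟨t, ht⟩ := isCompact_univ.elim_finite_subcover
      (fun y : ↥Yset => (Subtype.val ⁻¹' boxSet (bx y) : Set ↥Yset))
      (fun y => (boxSet_isOpen (bx y)).preimage continuous_subtype_val)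
      (fun y _ => Set.mem_iUnion.2 ⟨y, hbx1 y⟩)
    set B : List (List (ℕ × ℚ × ℚ)) := t.toList.map bx with hB
    set W₀ : Finset (Set X) := pullB bg rg B with hW₀X
    have hpbeq : ∀ b : List (ℕ × ℚ × ℚ),
        {x : X | ∀ c ∈ b, (c.2.1 : ℝ) < G bg rg c.1 x ∧ G bg rg c.1 x < (c.2.2 : ℝ)}
          = fmap ⁻¹' boxSet b := by
      intro b
      ext x
      simp only [Set.mem_setOf_eq, Set.mem_preimage, boxSet, hfmap]
    have hW₀cov : IsCov W₀ := by
      constructor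
      · intro u hu
        simp only [hW₀X, pullB, Finset.mem_image, List.mem_toFinset] at hu
        obtain ⟨b, hb, rfl⟩ := hu
        rw [hpbeq b]
        exact (boxSet_isOpen b).preimage hfc
      · intro x
        have hin : fY x ∈ ⋃ y ∈ t, (Subtype.val ⁻¹' boxSet (bx y) : Set ↥Yset) :=
          ht (Set.mem_univ _)
        simp only [Set.mem_iUnion] at hin
        obtain ⟨y, hyt, hmem⟩ := hin
        have hmemW : (fun b : List (ℕ × ℚ × ℚ) =>
            {x : X | ∀ c ∈ b, (c.2.1 : ℝ) < G bg rg c.1 x ∧ G bg rg c.1 x < (c.2.2 : ℝ)}) (bx y)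
            ∈ W₀ := by
          rw [hW₀X]
          unfold pullB
          apply Finset.mem_image_of_mem
          simp only [List.mem_toFinset]
          exact List.mem_map_of_mem (f := bx) (Finset.mem_toList.2 hyt)
        exact ⟨_, hmemW, hmem⟩
    set BtrY : Finset (Set ↥Yset) :=
      B.toFinset.image (fun b => (Subtype.val ⁻¹' boxSet b : Set ↥Yset)) with hBtrY
    have hBtrRef : Ref BtrY U₀Y := by
      intro w hw
      simp only [hBtrY, Finset.mem_image, List.mem_toFinset, hB, List.mem_map] at hw
      obtain ⟨b, ⟨y, hyt, rfl⟩, rfl⟩ := hw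
      exact hbx2 y
    set NP := nopat W₀ with hNP
    obtain ⟨hNPcov, hNPspec⟩ := hnopatSpec W₀ hW₀cov
    choose pad hpad using fun j : ℕ => exists_pad B j
    have hkey : ∀ (j : ℕ) (x : X),
        (fY x : ℕ → ℝ) (cEnc (Sum.inr (B, j, pad j))) = ug NP j x := by
      intro j x
      show G bg rg (cEnc (Sum.inr (B, j, pad j))) x = ug NP j x
      rw [G_resp bg rg B j (pad j) (hpad j) hW₀cov]
    set OY : Finset (Set ↥Yset) := (Finset.range (uk NP)).image
      (fun j => {y : ↥Yset | 0 < (y : ℕ → ℝ) (cEnc (Sum.inr (B, j, pad j)))}) with hOY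
    have hOYcov : IsCov OY := by
      constructor
      · intro o ho
        simp only [hOY, Finset.mem_image] at ho
        obtain ⟨j, _, rfl⟩ := ho
        exact isOpen_lt continuous_const (hevalc _)
      · intro y
        obtain ⟨x, rfl⟩ := hfYsurj y
        obtain ⟨j, hj, hpos⟩ := (huspec NP hNPcov).2 x
        refine ⟨{y : ↥Yset | 0 < (y : ℕ → ℝ) (cEnc (Sum.inr (B, j, pad j)))},
          Finset.mem_image_of_mem _ (Finset.mem_range.2 hj), ?_⟩
        show 0 < (fY x : ℕ → ℝ) (cEnc (Sum.inr (B, j, pad j)))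
        rw [hkey j x]
        exact hpos
    obtain ⟨V', hV'cov, hV'ref, S, hS⟩ := hBprop OY hOYcov
    have hS2 : Patt BtrY V' S := hS.of_ref hBtrRef
    have hSpull := hS2.pull hfYc hfYsurj
    have hpfB : pullF fY BtrY = W₀ := by
      rw [hBtrY, hW₀X]
      unfold pullF pullB
      rw [Finset.image_image]
      have hfeq : ((fun x => fY ⁻¹' x) ∘ fun b : List (ℕ × ℚ × ℚ) =>
          (Subtype.val ⁻¹' boxSet b : Set ↥Yset)) = (fun b : List (ℕ × ℚ × ℚ) =>
          {x : X | ∀ c ∈ b, (c.2.1 : ℝ) < G bg rg c.1 x ∧ G bg rg c.1 x < (c.2.2 : ℝ)}) := by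
        funext b
        show fY ⁻¹' (Subtype.val ⁻¹' boxSet b) = _
        rw [hpbeq b]
        rfl
      rw [hfeq]
      refine Finset.ext fun s => ?_
      simp only [Finset.mem_image, List.mem_toFinset]
    rw [hpfB] at hSpull
    have hV'X : IsCov (pullF fY V') := pullF_isCov hfYc hV'cov
    have hrefOY_NP : Ref (pullF fY OY) NP := by
      intro w hw
      simp only [pullF, hOY, Finset.mem_image, Finset.mem_range] at hw
      obtain ⟨o, ⟨j, hj, rfl⟩, rfl⟩ := hw
      refine ⟨uv NP j, ((huspec NP hNPcov).1 j hj).1, ?_⟩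
      intro x hx
      have hx' : 0 < (fY x : ℕ → ℝ) (cEnc (Sum.inr (B, j, pad j))) := hx
      rw [hkey j x] at hx'
      exact ((huspec NP hNPcov).1 j hj).2 hx'
    have hrefX : Ref (pullF fY V') NP := (pullF_ref hV'ref).trans hrefOY_NP
    exact hNPspec (pullF fY V') hV'X hrefX _ hSpull
  exact ⟨↥Yset, inferInstance, inferInstance, hYcomp, inferInstance, hYconn, hsszY, hnotch⟩

end
end

section
/- If there exists a continuum which has surjective semispan zero and is not chainable, then there exists a metrizable continuum which has surjective semispan zero and is not chainable. -/
/-- A continuum has surjective semispan zero if every subcontinuum `Z` of `X × X`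
with `π₂[Z] = X` meets the diagonal. -/
def SurjectiveSemispanZero (X : Type*) [TopologicalSpace X] : Prop :=
  ∀ Z : Set (X × X), IsClosed Z → IsConnected Z →
    Prod.snd '' Z = Set.univ → ∃ x : X, (x, x) ∈ Z

namespace NMC

noncomputable section
open Topology Filter Set Function

/-- The Hilbert cube. -/
abbrev Hc : Type := ℕ → unitInterval

/-- Square of a map, on pairs. -/
def Sq {X : Type*} (f : X → Hc) : X × X → Hc × Hc := fun p => (f p.1, f p.2)

lemma continuous_Sq {X : Type*} [TopologicalSpace X] {f : X → Hc} (hf : Continuous f) :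
    Continuous (Sq f) := (hf.comp continuous_fst).prodMk (hf.comp continuous_snd)

/-- `f` factors through `g` (pointwise formulation). -/
def Refines {X : Type*} (f g : X → Hc) : Prop := ∀ x y : X, g x = g y → f x = f y

lemma Refines.rfl {X : Type*} (f : X → Hc) : Refines f f := fun _ _ h => h

lemma Refines.trans {X : Type*} {f g h : X → Hc} (h1 : Refines f g) (h2 : Refines g h) :
    Refines f h := fun x y hxy => h1 x y (h2 x y hxy)

/-- Combine countably many maps into the Hilbert cube into one. -/
def combine {X : Type*} (f : ℕ → X → Hc) : X → Hc :=
  fun x j => f (Nat.pairEquiv.symm j).1 x (Nat.pairEquiv.symm j).2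

/-- Coordinate-retrieval map. -/
def retrMap (k : ℕ) : Hc → Hc := fun h j => h (Nat.pairEquiv (k, j))

lemma retr_combine {X : Type*} (f : ℕ → X → Hc) (k : ℕ) (x : X) :
    retrMap k (combine f x) = f k x := by
  funext j
  simp [retrMap, combine]

lemma continuous_combine {X : Type*} [TopologicalSpace X] {f : ℕ → X → Hc}
    (hf : ∀ k, Continuous (f k)) : Continuous (combine f) :=
  continuous_pi fun j => (continuous_apply _).comp (hf _)

lemma continuous_retrMap (k : ℕ) : Continuous (retrMap k) :=
  continuous_pi fun _ => continuous_apply _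

lemma refines_combine {X : Type*} (f : ℕ → X → Hc) (k : ℕ) : Refines (f k) (combine f) := by
  intro x y h
  have := congrArg (retrMap k) h
  rwa [retr_combine, retr_combine] at this

/-- Pair two maps. -/
def pair2 {X : Type*} (f g : X → Hc) : X → Hc :=
  fun x j => if j % 2 = 0 then f x (j / 2) else g x (j / 2)

lemma continuous_pair2 {X : Type*} [TopologicalSpace X] {f g : X → Hc}
    (hf : Continuous f) (hg : Continuous g) : Continuous (pair2 f g) := by
  refine continuous_pi fun j => ?_
  unfold pair2
  by_cases h : j % 2 = 0
  · simp only [if_pos h]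
    exact (continuous_apply _).comp hf
  · simp only [if_neg h]
    exact (continuous_apply _).comp hg

lemma refines_pair2_left {X : Type*} (f g : X → Hc) : Refines f (pair2 f g) := by
  intro x y h
  funext j
  have := congrFun h (2 * j)
  simpa [pair2, Nat.mul_div_cancel_left, Nat.mul_mod_right] using this

lemma refines_pair2_right {X : Type*} (f g : X → Hc) : Refines g (pair2 f g) := by
  intro x y h
  funext j
  have := congrFun h (2 * j + 1)
  have hmod : (2 * j + 1) % 2 = 1 := by omega
  have hdiv : (2 * j + 1) / 2 = j := by omega
  simpa [pair2, hmod, hdiv] using this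

/-- Embed a single `unitInterval`-valued function as a constant-in-coordinates map to `Hc`. -/
def embed1 {X : Type*} (f : X → unitInterval) : X → Hc := fun x _ => f x

lemma continuous_embed1 {X : Type*} [TopologicalSpace X] {f : X → unitInterval}
    (hf : Continuous f) : Continuous (embed1 f) := continuous_pi fun _ => hf

/-- Factorization lemma: if `φ` refines through `ψ` then there is a continuous factor map on
the range of `ψ`. -/
lemma factor {X : Type*} [TopologicalSpace X] [CompactSpace X] {φ ψ : X → Hc}
    (hφ : Continuous φ) (hψ : Continuous ψ) (h : Refines φ ψ) :
    ∃ g : (Set.range ψ) → Hc, Continuous g ∧ ∀ x : X, g ⟨ψ x, mem_range_self x⟩ = φ x := by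
  have hsurj : Surjective (rangeFactorization ψ) := rangeFactorization_surjective
  have hcont : Continuous (rangeFactorization ψ) := hψ.subtype_mk _
  have hq : IsQuotientMap (rangeFactorization ψ) :=
    (hcont.isClosedMap).isQuotientMap hcont hsurj
  refine ⟨fun y => φ (surjInv hsurj y), ?_, ?_⟩
  · rw [hq.continuous_iff]
    have : (fun y => φ (surjInv hsurj y)) ∘ rangeFactorization ψ = φ := by
      funext x
      refine h _ _ ?_
      have := surjInv_eq hsurj (rangeFactorization ψ x)
      exact congrArg Subtype.val this
    rw [this]; exact hφ
  · intro x
    refine h _ _ ?_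
    have : rangeFactorization ψ x = ⟨ψ x, mem_range_self x⟩ := rfl
    have h2 := surjInv_eq hsurj (⟨ψ x, mem_range_self x⟩ : range ψ)
    exact congrArg Subtype.val h2

section LS
variable {ι : Type*} {α : Type*} [TopologicalSpace α]

/-- Ultrafilter limit-superior of a family of sets. -/
def LS (U : Ultrafilter ι) (F : ι → Set α) : Set α :=
  {y | ∀ V : Set α, IsOpen V → y ∈ V → {i | (F i ∩ V).Nonempty} ∈ U}

lemma LS_closed (U : Ultrafilter ι) (F : ι → Set α) : IsClosed (LS U F) := by
  rw [← isOpen_compl_iff]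
  rw [isOpen_iff_forall_mem_open]
  intro y hy
  simp only [mem_compl_iff, LS, mem_setOf_eq, not_forall] at hy
  obtain ⟨V, hV, hyV, hnot⟩ := hy
  refine ⟨V, ?_, hV, hyV⟩
  intro z hz hzLS
  exact hnot (hzLS V hV hz)

lemma LS_subset_closed (U : Ultrafilter ι) (F : ι → Set α) {K : Set α} (hK : IsClosed K)
    (ha : {i | F i ⊆ K} ∈ U) : LS U F ⊆ K := by
  intro y hy
  by_contra hyK
  have h1 : {i | (F i ∩ Kᶜ).Nonempty} ∈ U := hy Kᶜ hK.isOpen_compl hyK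
  have h2 : ({i | (F i ∩ Kᶜ).Nonempty} ∩ {i | F i ⊆ K}).Nonempty :=
    Filter.nonempty_of_mem (Filter.inter_mem h1 ha)
  obtain ⟨i, hi1, hi2⟩ := h2
  obtain ⟨x, hx1, hx2⟩ := hi1
  exact hx2 (hi2 hx1)

lemma LS_inter_nonempty (U : Ultrafilter ι) (F : ι → Set α) {K : Set α} (hK : IsCompact K)
    (ha : {i | (F i ∩ K).Nonempty} ∈ U) : (LS U F ∩ K).Nonempty := by
  by_contra hemp
  have hall : ∀ y ∈ K, ∃ V : Set α, IsOpen V ∧ y ∈ V ∧ {i | (F i ∩ V).Nonempty} ∉ U := by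
    intro y hyK
    have hy : y ∉ LS U F := fun h => hemp ⟨y, h, hyK⟩
    simp only [LS, mem_setOf_eq, not_forall] at hy
    obtain ⟨V, hV, hyV, hnot⟩ := hy
    exact ⟨V, hV, hyV, hnot⟩
  choose! V hVo hVy hVnot using hall
  have hcover : K ⊆ ⋃ y ∈ K, V y := fun y hy => mem_biUnion hy (hVy y hy)
  -- finite subcover, index by subtype
  have hcover' : K ⊆ ⋃ y : K, V y := by
    intro z hz
    rcases mem_iUnion₂.mp (hcover hz) with ⟨y, hyK, hzy⟩
    exact mem_iUnion.mpr ⟨⟨y, hyK⟩, hzy⟩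
  obtain ⟨t, ht⟩ := hK.elim_finite_subcover (fun y : K => V y) (fun y => hVo y y.2) hcover'
  have hmem : ({i | (F i ∩ K).Nonempty} ∩ ⋂ y ∈ t, {i | (F i ∩ V y).Nonempty}ᶜ) ∈ U := by
    refine Filter.inter_mem ha ?_
    refine (Filter.biInter_finset_mem t).mpr ?_
    intro y _
    exact (Ultrafilter.compl_mem_iff_notMem).mpr (hVnot y y.2)
  obtain ⟨i, hi1, hi2⟩ := Filter.nonempty_of_mem hmem
  obtain ⟨x, hxF, hxK⟩ := hi1
  rcases mem_iUnion₂.mp (ht hxK) with ⟨y, hyt, hxy⟩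
  have := mem_iInter₂.mp hi2 y hyt
  exact this ⟨x, hxF, hxy⟩

lemma LS_connected [CompactSpace α] [T2Space α] (U : Ultrafilter ι) (F : ι → Set α)
    (hconn : {i | IsConnected (F i)} ∈ U) : IsConnected (LS U F) := by
  have hne : (LS U F).Nonempty := by
    have := LS_inter_nonempty U F isCompact_univ
      (Filter.mem_of_superset hconn (fun i hi => by
        simpa using hi.nonempty.mono (subset_inter Subset.rfl (subset_univ _))))
    simpa using this
  refine ⟨hne, ?_⟩
  intro u v hu hv hcov ⟨a, haLS, hau⟩ ⟨b, hbLS, hbv⟩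
  by_contra hne2
  have hempty : LS U F ∩ (u ∩ v) = ∅ := not_nonempty_iff_eq_empty.mp hne2
  set A₁ : Set α := LS U F ∩ vᶜ with hA₁def
  set A₂ : Set α := LS U F ∩ uᶜ with hA₂def
  have hA₁cl : IsClosed A₁ := (LS_closed U F).inter hv.isClosed_compl
  have hA₂cl : IsClosed A₂ := (LS_closed U F).inter hu.isClosed_compl
  have hdisj : Disjoint A₁ A₂ := by
    rw [Set.disjoint_left]
    rintro x ⟨hx1, hx1v⟩ ⟨hx2, hx2u⟩
    rcases hcov hx1 with h | h
    · exact hx2u h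
    · exact hx1v h
  obtain ⟨u', v', hu', hv', hA₁u', hA₂v', hdisj'⟩ :=
    NormalSpace.normal A₁ A₂ hA₁cl hA₂cl hdisj
  have hsplit : LS U F ⊆ u' ∪ v' := by
    intro x hx
    rcases hcov hx with h | h
    · by_cases hxv : x ∈ v
      · exact (hne2 ⟨x, hx, h, hxv⟩).elim
      · exact Or.inl (hA₁u' ⟨hx, hxv⟩)
    · by_cases hxu : x ∈ u
      · exact (hne2 ⟨x, hx, hxu, h⟩).elim
      · exact Or.inr (hA₂v' ⟨hx, hxu⟩)
  -- a ∈ u' : a ∈ A₁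
  have hav : a ∉ v := fun hav => hne2 ⟨a, haLS, hau, hav⟩
  have hau' : a ∈ u' := hA₁u' ⟨haLS, hav⟩
  have hbu : b ∉ u := fun hbu => hne2 ⟨b, hbLS, hbu, hbv⟩
  have hbv' : b ∈ v' := hA₂v' ⟨hbLS, hbu⟩
  -- a.e. F i ⊆ u' ∪ v'
  have hsub : {i | F i ⊆ u' ∪ v'} ∈ U := by
    by_contra hnot
    have hcompl : {i | (F i ∩ (u' ∪ v')ᶜ).Nonempty} ∈ U := by
      have := (Ultrafilter.compl_mem_iff_notMem).mpr hnot
      refine Filter.mem_of_superset this ?_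
      intro i hi
      simp only [mem_compl_iff, mem_setOf_eq] at hi
      rcases Set.not_subset.mp hi with ⟨x, hxF, hxnot⟩
      exact ⟨x, hxF, hxnot⟩
    have hK : IsCompact ((u' ∪ v')ᶜ) := ((hu'.union hv').isClosed_compl).isCompact
    obtain ⟨z, hzLS, hznot⟩ := LS_inter_nonempty U F hK hcompl
    exact hznot (hsplit hzLS)
  have hmeetu : {i | (F i ∩ u').Nonempty} ∈ U := haLS u' hu' hau'
  have hmeetv : {i | (F i ∩ v').Nonempty} ∈ U := hbLS v' hv' hbv'
  have hall : ({i | IsConnected (F i)} ∩ ({i | F i ⊆ u' ∪ v'} ∩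
      ({i | (F i ∩ u').Nonempty} ∩ {i | (F i ∩ v').Nonempty}))).Nonempty :=
    Filter.nonempty_of_mem (Filter.inter_mem hconn (Filter.inter_mem hsub
      (Filter.inter_mem hmeetu hmeetv)))
  obtain ⟨i, hic, hisub, himu, himv⟩ := hall
  have := hic.isPreconnected u' v' hu' hv' hisub himu himv
  rw [Set.disjoint_iff_inter_eq_empty.mp hdisj'] at this
  simpa using this

end LS

section Directed
variable {ι : Type*} {X : Type*} {Y : Type*} [TopologicalSpace X] [TopologicalSpace Y]

/-- Image of a directed intersection of compacta. -/
lemma image_iInter_directed [Nonempty ι] [T2Space Y] {f : X → Y} (hf : Continuous f)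
    (K : ι → Set X) (hd : Directed (· ⊇ ·) K) (hKc : ∀ i, IsCompact (K i))
    (hKcl : ∀ i, IsClosed (K i)) :
    f '' (⋂ i, K i) = ⋂ i, f '' (K i) := by
  apply Subset.antisymm
  · exact subset_iInter fun i => image_mono (iInter_subset K i)
  · intro y hy
    have hne : ∀ i, (K i ∩ f ⁻¹' {y}).Nonempty := by
      intro i
      obtain ⟨x, hxK, hxy⟩ := mem_iInter.mp hy i
      exact ⟨x, hxK, by simpa using hxy⟩
    have h := IsCompact.nonempty_iInter_of_directed_nonempty_isCompact_isClosed
      (fun i => K i ∩ f ⁻¹' {y})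
      (fun i j => by
        obtain ⟨k, hk1, hk2⟩ := hd i j
        exact ⟨k, inter_subset_inter_left _ hk1, inter_subset_inter_left _ hk2⟩)
      hne
      (fun i => (hKc i).inter_right (isClosed_singleton.preimage hf))
      (fun i => (hKcl i).inter (isClosed_singleton.preimage hf))
    obtain ⟨x, hx⟩ := h
    rw [mem_iInter] at hx
    refine ⟨x, mem_iInter.mpr fun i => (hx i).1, ?_⟩
    have := (hx (Classical.arbitrary ι)).2
    simpa using this

/-- A directed intersection of continua (in a suitable ambient space) is connected. -/
lemma iInter_connected_of_directed [Nonempty ι] [T2Space Y] [NormalSpace Y] (D : ι → Set Y)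
    (hd : Directed (· ⊇ ·) D) (hc : ∀ i, IsConnected (D i)) (hcomp : ∀ i, IsCompact (D i)) :
    IsConnected (⋂ i, D i) := by
  have hcl : ∀ i, IsClosed (D i) := fun i => (hcomp i).isClosed
  have hne : (⋂ i, D i).Nonempty :=
    IsCompact.nonempty_iInter_of_directed_nonempty_isCompact_isClosed D hd
      (fun i => (hc i).nonempty) hcomp hcl
  refine ⟨hne, ?_⟩
  intro u v hu hv hcov ⟨a, haD, hau⟩ ⟨b, hbD, hbv⟩
  by_contra hne2
  have hempty : (⋂ i, D i) ∩ (u ∩ v) = ∅ := not_nonempty_iff_eq_empty.mp hne2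
  set A₁ : Set Y := (⋂ i, D i) ∩ vᶜ with hA₁def
  set A₂ : Set Y := (⋂ i, D i) ∩ uᶜ with hA₂def
  have hIcl : IsClosed (⋂ i, D i) := isClosed_iInter hcl
  have hA₁cl : IsClosed A₁ := hIcl.inter hv.isClosed_compl
  have hA₂cl : IsClosed A₂ := hIcl.inter hu.isClosed_compl
  have hdisj : Disjoint A₁ A₂ := by
    rw [Set.disjoint_left]
    rintro x ⟨hx1, hx1v⟩ ⟨hx2, hx2u⟩
    rcases hcov hx1 with h | h
    · exact hx2u h
    · exact hx1v h
  obtain ⟨u', v', hu', hv', hA₁u', hA₂v', hdisj'⟩ :=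
    NormalSpace.normal A₁ A₂ hA₁cl hA₂cl hdisj
  have hsplit : (⋂ i, D i) ⊆ u' ∪ v' := by
    intro x hx
    rcases hcov hx with h | h
    · by_cases hxv : x ∈ v
      · exact (hne2 ⟨x, hx, h, hxv⟩).elim
      · exact Or.inl (hA₁u' ⟨hx, hxv⟩)
    · by_cases hxu : x ∈ u
      · exact (hne2 ⟨x, hx, hxu, h⟩).elim
      · exact Or.inr (hA₂v' ⟨hx, hxu⟩)
  -- some member is inside u' ∪ v'
  have hev : ∃ i, D i ⊆ u' ∪ v' := by
    by_contra hnot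
    push_neg at hnot
    have hne3 : ∀ i, (D i ∩ (u' ∪ v')ᶜ).Nonempty := by
      intro i
      rcases Set.not_subset.mp (hnot i) with ⟨x, hxD, hxn⟩
      exact ⟨x, hxD, hxn⟩
    have h := IsCompact.nonempty_iInter_of_directed_nonempty_isCompact_isClosed
      (fun i => D i ∩ (u' ∪ v')ᶜ)
      (fun i j => by
        obtain ⟨k, hk1, hk2⟩ := hd i j
        exact ⟨k, inter_subset_inter_left _ hk1, inter_subset_inter_left _ hk2⟩)
      hne3
      (fun i => (hcomp i).inter_right (hu'.union hv').isClosed_compl)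
      (fun i => (hcl i).inter (hu'.union hv').isClosed_compl)
    obtain ⟨x, hx⟩ := h
    rw [mem_iInter] at hx
    have hx1 : x ∈ ⋂ i, D i := mem_iInter.mpr fun i => (hx i).1
    exact (hx (Classical.arbitrary ι)).2 (hsplit hx1)
  obtain ⟨i₀, hi₀⟩ := hev
  have hav : a ∉ v := fun hav => hne2 ⟨a, haD, hau, hav⟩
  have hbu : b ∉ u := fun hbu => hne2 ⟨b, hbD, hbu, hbv⟩
  have hmu : (D i₀ ∩ u').Nonempty := ⟨a, (mem_iInter.mp haD) i₀, hA₁u' ⟨haD, hav⟩⟩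
  have hmv : (D i₀ ∩ v').Nonempty := ⟨b, (mem_iInter.mp hbD) i₀, hA₂v' ⟨hbD, hbu⟩⟩
  have := (hc i₀).isPreconnected u' v' hu' hv' hi₀ hmu hmv
  rw [Set.disjoint_iff_inter_eq_empty.mp hdisj'] at this
  simpa using this

end Directed

section Transfer

/-- Transfer of a connected set through a factorization. -/
lemma transfer_connected {X : Type*} [TopologicalSpace X] [CompactSpace X]
    {φ ψ : X → Hc} (hφ : Continuous φ) (hψ : Continuous ψ) (h : Refines φ ψ)
    {C : Set (Hc × Hc)} (hC : IsConnected C)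
    (hsub : C ⊆ (range ψ) ×ˢ (range ψ)) :
    IsConnected (Sq φ '' (Sq ψ ⁻¹' C)) := by
  obtain ⟨g, hg, hgspec⟩ := factor hφ hψ h
  haveI : ConnectedSpace C := Subtype.connectedSpace hC
  have hgval : ∀ (z : Hc) (hz : z ∈ range ψ) (x : X), z = ψ x → g ⟨z, hz⟩ = φ x := by
    intro z hz x hzx
    have : (⟨z, hz⟩ : range ψ) = ⟨ψ x, mem_range_self x⟩ := Subtype.ext hzx
    rw [this, hgspec]
  set m : C → Hc × Hc := fun c => (g ⟨(c : Hc × Hc).1, (hsub c.2).1⟩,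
    g ⟨(c : Hc × Hc).2, (hsub c.2).2⟩) with hm
  have hmc : Continuous m := by
    refine Continuous.prodMk ?_ ?_
    · exact hg.comp ((continuous_fst.comp continuous_subtype_val).subtype_mk _)
    · exact hg.comp ((continuous_snd.comp continuous_subtype_val).subtype_mk _)
  have hrange : range m = Sq φ '' (Sq ψ ⁻¹' C) := by
    apply Subset.antisymm
    · rintro _ ⟨c, rfl⟩
      obtain ⟨a, ha⟩ := (hsub c.2).1
      obtain ⟨b, hb⟩ := (hsub c.2).2
      refine ⟨(a, b), ?_, ?_⟩
      · show Sq ψ (a, b) ∈ C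
        have : Sq ψ (a, b) = (c : Hc × Hc) := by
          simp only [Sq]
          exact Prod.ext ha hb
        rw [this]; exact c.2
      · show Sq φ (a, b) = m c
        simp only [Sq, hm]
        refine Prod.ext ?_ ?_
        · exact (hgval _ _ a ha.symm).symm
        · exact (hgval _ _ b hb.symm).symm
    · rintro _ ⟨p, hp, rfl⟩
      refine ⟨⟨Sq ψ p, hp⟩, ?_⟩
      show m _ = Sq φ p
      simp only [hm]
      refine Prod.ext ?_ ?_
      · exact hgval _ _ p.1 rfl
      · exact hgval _ _ p.2 rfl
  rw [← hrange]
  exact isConnected_range hmc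

/-- Mapping lemma for ultrafilter limit sets. -/
lemma LS_map {ι α β : Type*} [TopologicalSpace α] [TopologicalSpace β]
    (U : Ultrafilter ι) (F : ι → Set α) (G : ι → Set β) {S : Set α}
    (g : S → β) (hg : Continuous g)
    (hFS : {i | F i ⊆ S} ∈ U)
    (hFG : {i | ∀ a : S, (a : α) ∈ F i → g a ∈ G i} ∈ U)
    {y : α} (hy : y ∈ LS U F) (hyS : y ∈ S) : g ⟨y, hyS⟩ ∈ LS U G := by
  intro V hV hgyV
  have hcont : ContinuousAt g ⟨y, hyS⟩ := hg.continuousAt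
  have hmem : g ⁻¹' V ∈ 𝓝 (⟨y, hyS⟩ : S) := hcont (hV.mem_nhds hgyV)
  rw [nhds_subtype_eq_comap, Filter.mem_comap] at hmem
  obtain ⟨W, hW, hWsub⟩ := hmem
  obtain ⟨W', hW'sub, hW'open, hyW'⟩ := mem_nhds_iff.mp hW
  have h1 : {i | (F i ∩ W').Nonempty} ∈ U := hy W' hW'open hyW'
  refine Filter.mem_of_superset (Filter.inter_mem h1 (Filter.inter_mem hFS hFG)) ?_
  rintro i ⟨⟨x, hxF, hxW'⟩, hiS, hiG⟩
  refine ⟨g ⟨x, hiS hxF⟩, hiG _ hxF, ?_⟩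
  have : (⟨x, hiS hxF⟩ : S) ∈ Subtype.val ⁻¹' W := by
    simp only [mem_preimage]
    exact hW'sub hxW'
  exact hWsub this

end Transfer

section Killing

variable {X : Type u} [TopologicalSpace X] [CompactSpace X] [T2Space X]

/-- No "bad continuum" over `A` at level `ψ`. -/
def Killed (ψ : X → Hc) (A : Set (X × X)) : Prop :=
  ¬ ∃ C : Set (Hc × Hc), IsClosed C ∧ IsConnected C ∧ C ⊆ Sq ψ '' A ∧
      Prod.snd '' C = Set.range ψ

theorem killing [Nonempty X] (hssz : SurjectiveSemispanZero X)
    (φb : X → Hc) (hφb : Continuous φb) (A : Set (X × X)) (hAcl : IsClosed A)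
    (hAsat : ∀ p : X × X, Sq φb p ∈ Sq φb '' A → p ∈ A)
    (hAdiag : ∀ x : X, (x, x) ∉ A) :
    ∃ ψ : X → Hc, Continuous ψ ∧ Refines φb ψ ∧ Killed ψ A := by
  by_contra hcon
  push_neg at hcon
  simp only [Killed, not_not] at hcon
  -- the directed system of levels refining φb
  let T := {χ : X → Hc // Continuous χ ∧ Refines φb χ}
  haveI : Nonempty T := ⟨⟨φb, hφb, Refines.rfl φb⟩⟩
  let le : T → T → Prop := fun a b => Refines a.1 b.1
  have hle_rfl : ∀ a : T, le a a := fun a => Refines.rfl a.1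
  have hle_trans : ∀ a b c : T, le a b → le b c → le a c :=
    fun _ _ _ h1 h2 => h1.trans h2
  have hdir : ∀ a b : T, ∃ c : T, le a c ∧ le b c := by
    intro a b
    exact ⟨⟨pair2 a.1 b.1, continuous_pair2 a.2.1 b.2.1,
      (a.2.2).trans (refines_pair2_left _ _)⟩,
      refines_pair2_left _ _, refines_pair2_right _ _⟩
  -- an ultrafilter containing all up-sets
  let Fil : Filter T := ⨅ ψ : T, Filter.principal {χ | le ψ χ}
  haveI hFne : Fil.NeBot := by
    apply iInf_neBot_of_directed
    · intro a b
      obtain ⟨c, hc1, hc2⟩ := hdir a b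
      refine ⟨c, ?_, ?_⟩
      · exact Filter.principal_mono.mpr (fun χ hχ => hle_trans _ _ _ hc1 hχ)
      · exact Filter.principal_mono.mpr (fun χ hχ => hle_trans _ _ _ hc2 hχ)
    · intro ψ
      exact Filter.principal_neBot_iff.mpr ⟨ψ, hle_rfl ψ⟩
  let U : Ultrafilter T := Ultrafilter.of Fil
  have hUp : ∀ ψ : T, {χ | le ψ χ} ∈ U := by
    intro ψ
    exact Filter.le_def.mp (Ultrafilter.of_le Fil) _
      (Filter.mem_iInf_of_mem ψ (Filter.mem_principal_self _))
  -- choose bad continua at every level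
  choose Cf hCcl hCconn hCsub hCsnd using fun χ : T => hcon χ.1 χ.2.1 χ.2.2
  have hCsubR : ∀ χ : T, Cf χ ⊆ (range χ.1) ×ˢ (range χ.1) := by
    intro χ z hz
    obtain ⟨p, _, rfl⟩ := hCsub χ hz
    exact ⟨mem_range_self _, mem_range_self _⟩
  -- the transferred families
  let Fam : T → T → Set (Hc × Hc) := fun ψ χ => Sq ψ.1 '' (Sq χ.1 ⁻¹' (Cf χ))
  have hF1 : ∀ ψ χ : T, Fam ψ χ ⊆ (range ψ.1) ×ˢ (range ψ.1) := by
    rintro ψ χ _ ⟨p, _, rfl⟩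
    exact ⟨mem_range_self _, mem_range_self _⟩
  have hF2 : ∀ ψ χ : T, le ψ χ → Fam ψ χ ⊆ Sq ψ.1 '' A := by
    rintro ψ χ hle _ ⟨p, hp, rfl⟩
    obtain ⟨a, haA, haeq⟩ := hCsub χ hp
    have h1 : χ.1 a.1 = χ.1 p.1 := congrArg Prod.fst haeq
    have h2 : χ.1 a.2 = χ.1 p.2 := congrArg Prod.snd haeq
    refine ⟨a, haA, ?_⟩
    exact Prod.ext (hle _ _ h1) (hle _ _ h2)
  have hF3 : ∀ ψ χ : T, le ψ χ → IsConnected (Fam ψ χ) := by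
    intro ψ χ hle
    exact transfer_connected ψ.2.1 χ.2.1 hle (hCconn χ) (hCsubR χ)
  have hF4 : ∀ ψ χ : T, le ψ χ → Prod.snd '' (Fam ψ χ) = range ψ.1 := by
    intro ψ χ hle
    apply Subset.antisymm
    · rintro _ ⟨_, ⟨p, _, rfl⟩, rfl⟩
      exact mem_range_self _
    · rintro _ ⟨a, rfl⟩
      have hmem : χ.1 a ∈ Prod.snd '' (Cf χ) := by
        rw [hCsnd χ]; exact mem_range_self _
      obtain ⟨c, hcC, hc2⟩ := hmem
      obtain ⟨w, hw⟩ := (hCsubR χ hcC).1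
      have hc : Sq χ.1 (w, a) = c := Prod.ext hw hc2.symm
      refine ⟨Sq ψ.1 (w, a), ⟨(w, a), ?_, rfl⟩, rfl⟩
      show Sq χ.1 (w, a) ∈ Cf χ
      rw [hc]; exact hcC
  -- the limit sets
  let Cs : T → Set (Hc × Hc) := fun ψ => LS U (Fam ψ)
  have hCs_cl : ∀ ψ : T, IsClosed (Cs ψ) := fun ψ => LS_closed U (Fam ψ)
  have hCs_conn : ∀ ψ : T, IsConnected (Cs ψ) := by
    intro ψ
    exact LS_connected U (Fam ψ)
      (Filter.mem_of_superset (hUp ψ) (fun χ hχ => hF3 ψ χ hχ))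
  have hCs_subA : ∀ ψ : T, Cs ψ ⊆ Sq ψ.1 '' A := by
    intro ψ
    refine LS_subset_closed U (Fam ψ)
      ((hAcl.isCompact.image (continuous_Sq ψ.2.1)).isClosed) ?_
    exact Filter.mem_of_superset (hUp ψ) (fun χ hχ => hF2 ψ χ hχ)
  have hCs_subR : ∀ ψ : T, Cs ψ ⊆ (range ψ.1) ×ˢ (range ψ.1) := by
    intro ψ
    refine LS_subset_closed U (Fam ψ)
      (((isCompact_range ψ.2.1).isClosed).prod ((isCompact_range ψ.2.1).isClosed)) ?_
    exact Filter.univ_mem' (fun χ => hF1 ψ χ)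
  have hCs_snd : ∀ (ψ : T) (x : X), ∃ w, (w, ψ.1 x) ∈ Cs ψ := by
    intro ψ x
    have hK : IsCompact ((univ : Set Hc) ×ˢ ({ψ.1 x} : Set Hc)) :=
      isCompact_univ.prod isCompact_singleton
    have ha : {χ | (Fam ψ χ ∩ (univ : Set Hc) ×ˢ ({ψ.1 x} : Set Hc)).Nonempty} ∈ U := by
      refine Filter.mem_of_superset (hUp ψ) ?_
      intro χ hχ
      have : ψ.1 x ∈ Prod.snd '' (Fam ψ χ) := by
        rw [hF4 ψ χ hχ]; exact mem_range_self _
      obtain ⟨z, hzF, hz2⟩ := this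
      exact ⟨z, hzF, mem_univ _, by simpa using hz2⟩
    obtain ⟨z, hzLS, hzK⟩ := LS_inter_nonempty U (Fam ψ) hK ha
    have hz2 : z.2 = ψ.1 x := by simpa using hzK.2
    exact ⟨z.1, by rwa [show (z.1, ψ.1 x) = z from Prod.ext rfl hz2.symm]⟩
  -- coherence
  have hCs_coh : ∀ ψ ψ' : T, le ψ ψ' → ∀ p : X × X,
      Sq ψ'.1 p ∈ Cs ψ' → Sq ψ.1 p ∈ Cs ψ := by
    intro ψ ψ' hle p hp
    obtain ⟨g, hg, hgspec⟩ := factor ψ.2.1 ψ'.2.1 hle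
    have hgval : ∀ (z : Hc) (hz : z ∈ range ψ'.1) (x : X), z = ψ'.1 x → g ⟨z, hz⟩ = ψ.1 x := by
      intro z hz x hzx
      have : (⟨z, hz⟩ : range ψ'.1) = ⟨ψ'.1 x, mem_range_self x⟩ := Subtype.ext hzx
      rw [this, hgspec]
    set S : Set (Hc × Hc) := (range ψ'.1) ×ˢ (range ψ'.1) with hS
    set gp : S → Hc × Hc := fun s =>
      (g ⟨(s : Hc × Hc).1, s.2.1⟩, g ⟨(s : Hc × Hc).2, s.2.2⟩) with hgp
    have hgpc : Continuous gp := by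
      refine Continuous.prodMk ?_ ?_
      · exact hg.comp ((continuous_fst.comp continuous_subtype_val).subtype_mk _)
      · exact hg.comp ((continuous_snd.comp continuous_subtype_val).subtype_mk _)
    have hFS : {χ | Fam ψ' χ ⊆ S} ∈ U := Filter.univ_mem' (fun χ => hF1 ψ' χ)
    have hFG : {χ | ∀ a : S, (a : Hc × Hc) ∈ Fam ψ' χ → gp a ∈ Fam ψ χ} ∈ U := by
      refine Filter.mem_of_superset (hUp ψ') ?_
      intro χ hχ a ha
      obtain ⟨p₀, hp₀, hval⟩ := ha
      have h1 : (a : Hc × Hc).1 = ψ'.1 p₀.1 := by rw [← hval]; rfl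
      have h2 : (a : Hc × Hc).2 = ψ'.1 p₀.2 := by rw [← hval]; rfl
      have : gp a = Sq ψ.1 p₀ := by
        simp only [hgp]
        exact Prod.ext (hgval _ _ p₀.1 h1) (hgval _ _ p₀.2 h2)
      rw [this]
      exact ⟨p₀, hp₀, rfl⟩
    have hpS : Sq ψ'.1 p ∈ S := ⟨mem_range_self _, mem_range_self _⟩
    have := LS_map U (Fam ψ') (Fam ψ) gp hgpc hFS hFG hp hpS
    have hval : gp ⟨Sq ψ'.1 p, hpS⟩ = Sq ψ.1 p := by
      simp only [hgp]
      exact Prod.ext (hgval _ _ p.1 rfl) (hgval _ _ p.2 rfl)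
    rwa [hval] at this
  -- the limit continuum inside X × X
  let K : T → Set (X × X) := fun χ => Sq χ.1 ⁻¹' (Cs χ)
  have hKcl : ∀ χ : T, IsClosed (K χ) := fun χ => (hCs_cl χ).preimage (continuous_Sq χ.2.1)
  have hKcomp : ∀ χ : T, IsCompact (K χ) := fun χ => (hKcl χ).isCompact
  have hKmono : ∀ ψ χ : T, le ψ χ → K χ ⊆ K ψ := by
    intro ψ χ hle p hp
    exact hCs_coh ψ χ hle p hp
  have hKdir : Directed (· ⊇ ·) K := by
    intro a b
    obtain ⟨c, hc1, hc2⟩ := hdir a b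
    exact ⟨c, hKmono a c hc1, hKmono b c hc2⟩
  set C : Set (X × X) := ⋂ χ : T, K χ with hCdef
  have hCclosed : IsClosed C := isClosed_iInter hKcl
  -- second projection is onto
  have hCsnd : ∀ x : X, ∃ w : X, (w, x) ∈ C := by
    intro x
    have h := IsCompact.nonempty_iInter_of_directed_nonempty_isCompact_isClosed
      (fun χ : T => K χ ∩ {p : X × X | p.2 = x})
      (by
        intro a b
        obtain ⟨c, hc1, hc2⟩ := hdir a b
        exact ⟨c, inter_subset_inter_left _ (hKmono a c hc1),
          inter_subset_inter_left _ (hKmono b c hc2)⟩)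
      (by
        intro χ
        obtain ⟨w, hw⟩ := hCs_snd χ x
        obtain ⟨aw, haw⟩ := (hCs_subR χ hw).1
        refine ⟨(aw, x), ?_, rfl⟩
        show Sq χ.1 (aw, x) ∈ Cs χ
        rwa [show Sq χ.1 (aw, x) = (w, χ.1 x) from Prod.ext haw rfl])
      (fun χ => (hKcomp χ).inter_right (isClosed_eq continuous_snd continuous_const))
      (fun χ => (hKcl χ).inter (isClosed_eq continuous_snd continuous_const))
    obtain ⟨p, hp⟩ := h
    rw [mem_iInter] at hp
    have hp2 : p.2 = x := (hp (Classical.arbitrary T)).2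
    refine ⟨p.1, ?_⟩
    have : p ∈ C := mem_iInter.mpr fun χ => (hp χ).1
    rwa [show (p.1, x) = p from Prod.ext rfl hp2.symm]
  -- images of C are connected
  have hImg : ∀ ψ : T, IsConnected (Sq ψ.1 '' C) := by
    intro ψ
    have heq : Sq ψ.1 '' C = ⋂ χ : T, Sq ψ.1 '' (K χ) :=
      image_iInter_directed (continuous_Sq ψ.2.1) K hKdir hKcomp hKcl
    have hcof : (⋂ χ : T, Sq ψ.1 '' (K χ)) = ⋂ χ : {χ : T // le ψ χ}, Sq ψ.1 '' (K χ.1) := by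
      apply Subset.antisymm
      · exact fun z hz => mem_iInter.mpr fun χ => mem_iInter.mp hz χ.1
      · intro z hz
        refine mem_iInter.mpr fun χ₀ => ?_
        obtain ⟨c, hc1, hc2⟩ := hdir χ₀ ψ
        have : z ∈ Sq ψ.1 '' (K c) := mem_iInter.mp hz ⟨c, hc2⟩
        exact image_mono (hKmono χ₀ c hc1) this
    rw [heq, hcof]
    haveI : Nonempty {χ : T // le ψ χ} := ⟨⟨ψ, hle_rfl ψ⟩⟩
    refine iInter_connected_of_directed _ ?_ ?_ ?_
    · intro a b
      obtain ⟨c, hc1, hc2⟩ := hdir a.1 b.1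
      refine ⟨⟨c, hle_trans _ _ _ a.2 hc1⟩, ?_, ?_⟩
      · exact image_mono (hKmono a.1 c hc1)
      · exact image_mono (hKmono b.1 c hc2)
    · intro χ
      exact transfer_connected ψ.2.1 χ.1.2.1 χ.2 (hCs_conn χ.1) (hCs_subR χ.1)
    · intro χ
      exact (hKcomp χ.1).image (continuous_Sq ψ.2.1)
  -- C is connected
  have hCne : C.Nonempty := by
    obtain ⟨w, hw⟩ := hCsnd (Classical.arbitrary X)
    exact ⟨_, hw⟩
  have hCconn' : IsConnected C := by
    refine ⟨hCne, ?_⟩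
    intro u v hu hv hcov ⟨a, haC, hau⟩ ⟨b, hbC, hbv⟩
    by_contra hne2
    set A₁ : Set (X × X) := C ∩ vᶜ with hA₁def
    set A₂ : Set (X × X) := C ∩ uᶜ with hA₂def
    have hA₁cl : IsClosed A₁ := hCclosed.inter hv.isClosed_compl
    have hA₂cl : IsClosed A₂ := hCclosed.inter hu.isClosed_compl
    have hdisjA : ∀ p, p ∈ A₁ → p ∈ A₂ → False := by
      rintro p ⟨hp1, hpv⟩ ⟨_, hpu⟩
      rcases hcov hp1 with h | h
      · exact hpu h
      · exact hpv h
    have hCsplit : C = A₁ ∪ A₂ := by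
      apply Subset.antisymm
      · intro p hp
        rcases hcov hp with h | h
        · by_cases hpv : p ∈ v
          · exact (hne2 ⟨p, hp, h, hpv⟩).elim
          · exact Or.inl ⟨hp, hpv⟩
        · by_cases hpu : p ∈ u
          · exact (hne2 ⟨p, hp, hpu, h⟩).elim
          · exact Or.inr ⟨hp, hpu⟩
      · rintro p (⟨hp, _⟩ | ⟨hp, _⟩) <;> exact hp
    have hA₁ne : A₁.Nonempty := ⟨a, haC, fun hav => hne2 ⟨a, haC, hau, hav⟩⟩
    have hA₂ne : A₂.Nonempty := ⟨b, hbC, fun hbu => hne2 ⟨b, hbC, hbu, hbv⟩⟩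
    -- at every level the images of A₁ and A₂ meet
    have hmeet : ∀ ψ : T, ((Sq ψ.1 '' A₁) ∩ (Sq ψ.1 '' A₂)).Nonempty := by
      intro ψ
      by_contra hempty
      have himgs : Sq ψ.1 '' C = (Sq ψ.1 '' A₁) ∪ (Sq ψ.1 '' A₂) := by
        rw [hCsplit, image_union]
      have h1cl : IsClosed (Sq ψ.1 '' A₁) :=
        ((hA₁cl.isCompact).image (continuous_Sq ψ.2.1)).isClosed
      have h2cl : IsClosed (Sq ψ.1 '' A₂) :=
        ((hA₂cl.isCompact).image (continuous_Sq ψ.2.1)).isClosed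
      have := (hImg ψ).isPreconnected (Sq ψ.1 '' A₂)ᶜ (Sq ψ.1 '' A₁)ᶜ
        h2cl.isOpen_compl h1cl.isOpen_compl
        (by
          intro z hz
          rw [himgs] at hz
          rcases hz with h | h
          · exact Or.inl (fun h2 => hempty ⟨z, h, h2⟩)
          · exact Or.inr (fun h1 => hempty ⟨z, h1, h⟩))
        (by
          obtain ⟨p, hp⟩ := hA₁ne
          refine ⟨Sq ψ.1 p, ?_, ?_⟩
          · rw [himgs]; exact Or.inl ⟨p, hp, rfl⟩
          · exact fun h2 => hempty ⟨Sq ψ.1 p, ⟨p, hp, rfl⟩, h2⟩)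
        (by
          obtain ⟨p, hp⟩ := hA₂ne
          refine ⟨Sq ψ.1 p, ?_, ?_⟩
          · rw [himgs]; exact Or.inr ⟨p, hp, rfl⟩
          · exact fun h1 => hempty ⟨Sq ψ.1 p, h1, ⟨p, hp, rfl⟩⟩)
      obtain ⟨z, hzC, hz2, hz1⟩ := this
      rw [himgs] at hzC
      rcases hzC with h | h
      · exact hz1 h
      · exact hz2 h
    -- the coincidence sets
    let E : T → Set ((X × X) × (X × X)) := fun ψ =>
      {q | q.1 ∈ A₁ ∧ q.2 ∈ A₂ ∧ Sq ψ.1 q.1 = Sq ψ.1 q.2}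
    have hEcl : ∀ ψ : T, IsClosed (E ψ) := by
      intro ψ
      refine IsClosed.inter (hA₁cl.preimage continuous_fst) ?_
      refine IsClosed.inter (hA₂cl.preimage continuous_snd) ?_
      exact isClosed_eq ((continuous_Sq ψ.2.1).comp continuous_fst)
        ((continuous_Sq ψ.2.1).comp continuous_snd)
    have hEne : ∀ ψ : T, (E ψ).Nonempty := by
      intro ψ
      obtain ⟨z, ⟨p₁, hp₁, hz₁⟩, ⟨p₂, hp₂, hz₂⟩⟩ := hmeet ψ
      exact ⟨(p₁, p₂), hp₁, hp₂, by rw [hz₁, hz₂]⟩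
    have hEmono : ∀ ψ χ : T, le ψ χ → E χ ⊆ E ψ := by
      rintro ψ χ hle q ⟨hq1, hq2, hqeq⟩
      refine ⟨hq1, hq2, ?_⟩
      have h1 : χ.1 q.1.1 = χ.1 q.2.1 := congrArg Prod.fst hqeq
      have h2 : χ.1 q.1.2 = χ.1 q.2.2 := congrArg Prod.snd hqeq
      exact Prod.ext (hle _ _ h1) (hle _ _ h2)
    have hE := IsCompact.nonempty_iInter_of_directed_nonempty_isCompact_isClosed E
      (by
        intro a b
        obtain ⟨c, hc1, hc2⟩ := hdir a b
        exact ⟨c, hEmono a c hc1, hEmono b c hc2⟩)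
      hEne (fun ψ => (hEcl ψ).isCompact) hEcl
    obtain ⟨q, hq⟩ := hE
    rw [mem_iInter] at hq
    have hq1 : q.1 ∈ A₁ := (hq (Classical.arbitrary T)).1
    have hq2 : q.2 ∈ A₂ := (hq (Classical.arbitrary T)).2.1
    have hqne : q.1 ≠ q.2 := fun h => hdisjA q.1 hq1 (h ▸ hq2)
    -- separate by a Urysohn function
    have hcomp : q.1.1 ≠ q.2.1 ∨ q.1.2 ≠ q.2.2 := by
      by_contra hcon2
      push_neg at hcon2
      exact hqne (Prod.ext hcon2.1 hcon2.2)
    have hsep : ∀ c d : X, c ≠ d → ∃ hI : X → unitInterval,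
        Continuous hI ∧ hI c ≠ hI d := by
      intro c d hcd
      obtain ⟨f, hf0, hf1, hficc⟩ := exists_continuous_zero_one_of_isClosed
        (isClosed_singleton (x := c)) (isClosed_singleton (x := d))
        (by simpa [Set.disjoint_singleton] using hcd)
      refine ⟨fun x => ⟨f x, hficc x⟩, f.continuous.subtype_mk _, ?_⟩
      intro heq
      have : f c = f d := congrArg Subtype.val heq
      rw [hf0 rfl, hf1 rfl] at this
      simpa using this
    have hfinal : False := by
      rcases hcomp with hne | hne
      · obtain ⟨hI, hIc, hIne⟩ := hsep _ _ hne
        set ψs : T := ⟨pair2 φb (embed1 hI), continuous_pair2 hφb (continuous_embed1 hIc),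
          refines_pair2_left _ _⟩ with hψs
        have heq := (hq ψs).2.2
        have h1 : (pair2 φb (embed1 hI)) q.1.1 = (pair2 φb (embed1 hI)) q.2.1 :=
          congrArg Prod.fst heq
        have := congrFun h1 1
        simp only [pair2] at this
        norm_num at this
        exact hIne (by simpa [embed1] using this)
      · obtain ⟨hI, hIc, hIne⟩ := hsep _ _ hne
        set ψs : T := ⟨pair2 φb (embed1 hI), continuous_pair2 hφb (continuous_embed1 hIc),
          refines_pair2_left _ _⟩ with hψs
        have heq := (hq ψs).2.2
        have h1 : (pair2 φb (embed1 hI)) q.1.2 = (pair2 φb (embed1 hI)) q.2.2 :=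
          congrArg Prod.snd heq
        have := congrFun h1 1
        simp only [pair2] at this
        norm_num at this
        exact hIne (by simpa [embed1] using this)
    exact hfinal
  -- apply surjective semispan zero
  have hsndC : Prod.snd '' C = (univ : Set X) := by
    apply Subset.antisymm (subset_univ _)
    intro x _
    obtain ⟨w, hw⟩ := hCsnd x
    exact ⟨(w, x), hw, rfl⟩
  obtain ⟨x, hx⟩ := hssz C hCclosed hCconn' hsndC
  have hbase : (x, x) ∈ K ⟨φb, hφb, Refines.rfl φb⟩ := mem_iInter.mp hx _
  have : Sq φb (x, x) ∈ Sq φb '' A := hCs_subA _ hbase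
  exact hAdiag x (hAsat (x, x) this)

end Killing

section Main

variable {X : Type u} [TopologicalSpace X] [CompactSpace X] [T2Space X]

/-- The "far from the diagonal at level φ" sets. -/
def ABad (φ : X → Hc) (Φ : Finset (ℕ × ℕ)) : Set (X × X) :=
  {p | ∃ q ∈ Φ, 1 / ((q.2 : ℝ) + 1) ≤ |((φ p.1 q.1 : ℝ)) - ((φ p.2 q.1 : ℝ))|}

lemma ABad_closed {φ : X → Hc} (hφ : Continuous φ) (Φ : Finset (ℕ × ℕ)) :
    IsClosed (ABad φ Φ) := by
  have : ABad φ Φ = ⋃ q ∈ (Φ : Set (ℕ × ℕ)),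
      {p : X × X | 1 / ((q.2 : ℝ) + 1) ≤ |((φ p.1 q.1 : ℝ)) - ((φ p.2 q.1 : ℝ))|} := by
    ext p; simp [ABad]
  rw [this]
  refine Set.Finite.isClosed_biUnion (Φ.finite_toSet) ?_
  intro q _
  refine isClosed_le continuous_const ?_
  have h1 : Continuous fun p : X × X => (φ p.1 q.1 : ℝ) :=
    continuous_subtype_val.comp ((continuous_apply q.1).comp (hφ.comp continuous_fst))
  have h2 : Continuous fun p : X × X => (φ p.2 q.1 : ℝ) :=
    continuous_subtype_val.comp ((continuous_apply q.1).comp (hφ.comp continuous_snd))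
  exact (h1.sub h2).abs

lemma ABad_sat (φ : X → Hc) (Φ : Finset (ℕ × ℕ)) :
    ∀ p : X × X, Sq φ p ∈ Sq φ '' (ABad φ Φ) → p ∈ ABad φ Φ := by
  rintro p ⟨a, ⟨q, hq, hval⟩, heq⟩
  have h1 : φ a.1 = φ p.1 := congrArg Prod.fst heq
  have h2 : φ a.2 = φ p.2 := congrArg Prod.snd heq
  refine ⟨q, hq, ?_⟩
  rw [← congrFun h1 q.1, ← congrFun h2 q.1]
  exact hval

lemma ABad_diag (φ : X → Hc) (Φ : Finset (ℕ × ℕ)) :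
    ∀ x : X, (x, x) ∉ ABad φ Φ := by
  rintro x ⟨q, _, hval⟩
  simp only [sub_self, abs_zero] at hval
  have : (0 : ℝ) < 1 / ((q.2 : ℝ) + 1) := by positivity
  linarith

theorem main_aux {X : Type u} [TopologicalSpace X] [CompactSpace X] [T2Space X]
    [ConnectedSpace X] (hssz : SurjectiveSemispanZero X) (hnch : ¬ Chainable X) :
    ∃ (Y : Type) (_ : TopologicalSpace Y),
      TopologicalSpace.MetrizableSpace Y ∧
      CompactSpace Y ∧ T2Space Y ∧ ConnectedSpace Y ∧ SurjectiveSemispanZero Y ∧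
      ¬ Chainable Y := by
  haveI : Nonempty X := ConnectedSpace.toNonempty
  classical
  -- 1. extract bad cover
  have hnch' : ∃ U : Finset (Set X), (∀ u ∈ U, IsOpen u) ∧
      ⋃₀ (U : Set (Set X)) = Set.univ ∧
      ¬∃ (n : ℕ) (V : Fin n → Set X),
        (∀ i, IsOpen (V i)) ∧ (⋃ i, V i) = Set.univ ∧
        (∀ i, ∃ u ∈ U, V i ⊆ u) ∧
        ∀ i j : Fin n, (V i ∩ V j).Nonempty ↔ |((i : ℕ) : ℤ) - ((j : ℕ) : ℤ)| ≤ 1 := by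
    by_contra h
    apply hnch
    intro U hUo hUcov
    by_contra hno
    exact h ⟨U, hUo, hUcov, hno⟩
  obtain ⟨U, hUo, hUcov, hnochain⟩ := hnch'
  -- enumerate the cover
  set k := U.card with hk
  set u : Fin k → Set X := fun i => U.toList.get ⟨i.1, by rw [Finset.length_toList]; exact i.2⟩
    with hu
  have hmemU : ∀ i, u i ∈ U := fun i => Finset.mem_toList.mp (List.get_mem _ _)
  have hcovU : (⋃ i, u i) = Set.univ := by
    apply Subset.antisymm (subset_univ _)
    intro x _
    have hx : x ∈ ⋃₀ (U : Set (Set X)) := by rw [hUcov]; trivial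
    obtain ⟨s, hsU, hxs⟩ := hx
    obtain ⟨m, hm⟩ := List.mem_iff_get.mp (Finset.mem_toList.mpr hsU)
    refine mem_iUnion.mpr ⟨⟨m.1, by rw [hk, ← Finset.length_toList]; exact m.2⟩, ?_⟩
    show x ∈ U.toList.get _
    rw [show (⟨m.1, _⟩ : Fin U.toList.length) = m from Fin.eta m m.2]
    rw [hm]; exact hxs
  -- shrink the cover
  obtain ⟨v, hvcov, hvo, hvcl⟩ := exists_subset_iUnion_closure_subset isClosed_univ
    (fun i => hUo (u i) (hmemU i)) (fun x _ => Set.toFinite _) (by rw [hcovU])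
  -- Urysohn functions
  have hury : ∀ i : Fin k, ∃ f : C(X, ℝ), Set.EqOn f 0 ((u i)ᶜ) ∧
      Set.EqOn f 1 (closure (v i)) ∧ ∀ x, f x ∈ Set.Icc (0 : ℝ) 1 := by
    intro i
    exact exists_continuous_zero_one_of_isClosed (hUo (u i) (hmemU i)).isClosed_compl
      isClosed_closure (disjoint_left.mpr (fun x hxc hxcl => hxc (hvcl i hxcl)))
  choose fs hfs0 hfs1 hfsI using hury
  -- the base level
  set φ0 : X → Hc := fun x j => if h : j < k then ⟨fs ⟨j, h⟩ x, hfsI ⟨j, h⟩ x⟩ else 0 with hφ0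
  have hφ0c : Continuous φ0 := by
    rw [hφ0]
    refine continuous_pi fun j => ?_
    by_cases h : j < k
    · simp only [dif_pos h]
      exact ((fs ⟨j, h⟩).continuous).subtype_mk _
    · simp only [dif_neg h]
      exact continuous_const
  -- enumeration of finite sets of pairs
  haveI : Denumerable (Finset (ℕ × ℕ)) := Denumerable.ofEncodableOfInfinite _
  set eΦ : ℕ → Finset (ℕ × ℕ) := ⇑(Denumerable.eqv (Finset (ℕ × ℕ))).symm with heΦdef
  have heΦsurj : Function.Surjective eΦ := (Denumerable.eqv _).symm.surjective
  -- killers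
  have hkil : ∀ (L : {f : X → Hc // Continuous f}) (Φ : Finset (ℕ × ℕ)),
      ∃ ψ : {f : X → Hc // Continuous f}, Refines L.1 ψ.1 ∧ Killed ψ.1 (ABad L.1 Φ) := by
    intro L Φ
    obtain ⟨ψ, hψc, hψr, hψk⟩ := killing hssz L.1 L.2 (ABad L.1 Φ)
      (ABad_closed L.2 Φ) (ABad_sat L.1 Φ) (ABad_diag L.1 Φ)
    exact ⟨⟨ψ, hψc⟩, hψr, hψk⟩
  choose kil hkil1 hkil2 using hkil
  -- the levels
  let fam : {f : X → Hc // Continuous f} → ℕ → X → Hc := fun L m =>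
    Nat.casesOn m L.1 (fun m' => (kil L (eΦ m')).1)
  have hfamc : ∀ L m, Continuous (fam L m) := by
    intro L m
    cases m with
    | zero => exact L.2
    | succ m' => exact (kil L (eΦ m')).2
  let Lev : ℕ → {f : X → Hc // Continuous f} := fun n =>
    Nat.rec ⟨φ0, hφ0c⟩ (fun _ L => ⟨combine (fam L), continuous_combine (hfamc L)⟩) n
  have hLev_succ : ∀ n, (Lev (n + 1)).1 = combine (fam (Lev n)) := fun n => rfl
  have hLev0 : (Lev 0).1 = φ0 := rfl
  -- the limit map
  set φs : X → Hc := combine (fun n => (Lev n).1) with hφs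
  have hφsc : Continuous φs := continuous_combine (fun n => (Lev n).2)
  have hretrL : ∀ n x, retrMap n (φs x) = (Lev n).1 x := fun n x => retr_combine _ n x
  have hinj : ∀ x y : X, (∀ n, (Lev n).1 x = (Lev n).1 y) → φs x = φs y := by
    intro x y h
    funext j
    show (Lev (Nat.pairEquiv.symm j).1).1 x (Nat.pairEquiv.symm j).2 = _
    rw [h (Nat.pairEquiv.symm j).1]
    rfl
  -- the metrizable continuum
  set Yt : Type := ↥(Set.range φs) with hYt
  haveI hYcomp : CompactSpace Yt := isCompact_iff_compactSpace.mp (isCompact_range hφsc)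
  haveI hYconn : ConnectedSpace Yt := Subtype.connectedSpace (isConnected_range hφsc)
  set pY : X → Yt := fun x => ⟨φs x, mem_range_self x⟩ with hpY
  have hpYc : Continuous pY := hφsc.subtype_mk _
  have hpYsurj : ∀ y : Yt, ∃ x, pY x = y := by
    rintro ⟨w, x, hx⟩
    exact ⟨x, Subtype.ext hx⟩
  set retr : ℕ → Yt → Hc := fun n y => retrMap n y.1 with hretr
  have hretrc : ∀ n, Continuous (retr n) :=
    fun n => (continuous_retrMap n).comp continuous_subtype_val
  have hretr_spec : ∀ n x, retr n (pY x) = (Lev n).1 x := fun n x => hretrL n x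
  refine ⟨Yt, inferInstance, inferInstance, inferInstance, inferInstance, inferInstance, ?_, ?_⟩
  · -- Surjective semispan zero for Yt
    intro Z hZcl hZconn hZsnd
    by_cases hE : ∀ n : ℕ, ({z : Yt × Yt | z ∈ Z ∧ retr n z.1 = retr n z.2}).Nonempty
    · -- all coincidence sets nonempty: diagonal point
      set E : ℕ → Set (Yt × Yt) := fun n => {z | z ∈ Z ∧ retr n z.1 = retr n z.2} with hEdef
      have hEcl : ∀ n, IsClosed (E n) := by
        intro n
        exact hZcl.inter (isClosed_eq ((hretrc n).comp continuous_fst)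
          ((hretrc n).comp continuous_snd))
      have hEdec : ∀ n, E (n + 1) ⊆ E n := by
        rintro n z ⟨hzZ, hzeq⟩
        refine ⟨hzZ, ?_⟩
        obtain ⟨x₁, hx₁⟩ := hpYsurj z.1
        obtain ⟨x₂, hx₂⟩ := hpYsurj z.2
        rw [← hx₁, ← hx₂, hretr_spec, hretr_spec] at hzeq ⊢
        have hr : Refines (Lev n).1 (Lev (n + 1)).1 := by
          rw [hLev_succ]
          exact refines_combine (fam (Lev n)) 0
        exact hr x₁ x₂ hzeq
      obtain ⟨z, hz⟩ := IsCompact.nonempty_iInter_of_sequence_nonempty_isCompact_isClosed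
        E hEdec hE ((hEcl 0).isCompact) hEcl
      rw [mem_iInter] at hz
      obtain ⟨x₁, hx₁⟩ := hpYsurj z.1
      obtain ⟨x₂, hx₂⟩ := hpYsurj z.2
      have hlev : ∀ n, (Lev n).1 x₁ = (Lev n).1 x₂ := by
        intro n
        have := (hz n).2
        rwa [← hx₁, ← hx₂, hretr_spec, hretr_spec] at this
      have hz12 : z.1 = z.2 := by
        rw [← hx₁, ← hx₂]
        exact Subtype.ext (hinj x₁ x₂ hlev)
      refine ⟨z.1, ?_⟩
      have hzZ := (hz 0).1
      rwa [show z = (z.1, z.1) from Prod.ext rfl hz12.symm] at hzZ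
    · -- some coincidence set empty: contradiction with the killer
      push_neg at hE
      obtain ⟨n, hEn⟩ := hE
      have hneq : ∀ z ∈ Z, retr n z.1 ≠ retr n z.2 := by
        intro z hz heq
        have : z ∈ ({z : Yt × Yt | z ∈ Z ∧ retr n z.1 = retr n z.2}) := ⟨hz, heq⟩
        rw [hEn] at this
        exact this
      set O : ℕ × ℕ → Set (Yt × Yt) := fun q =>
        {z | 1 / ((q.2 : ℝ) + 1) < |((retr n z.1 q.1 : ℝ)) - ((retr n z.2 q.1 : ℝ))|} with hO
      have hOopen : ∀ q, IsOpen (O q) := by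
        intro q
        refine isOpen_lt continuous_const ?_
        have h1 : Continuous fun z : Yt × Yt => (retr n z.1 q.1 : ℝ) :=
          continuous_subtype_val.comp ((continuous_apply q.1).comp
            ((hretrc n).comp continuous_fst))
        have h2 : Continuous fun z : Yt × Yt => (retr n z.2 q.1 : ℝ) :=
          continuous_subtype_val.comp ((continuous_apply q.1).comp
            ((hretrc n).comp continuous_snd))
        exact (h1.sub h2).abs
      have hZO : Z ⊆ ⋃ q, O q := by
        intro z hz
        have : ∃ j, retr n z.1 j ≠ retr n z.2 j := by
          by_contra h
          push_neg at h
          exact hneq z hz (funext h)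
        obtain ⟨j, hj⟩ := this
        have hpos : 0 < |((retr n z.1 j : ℝ)) - ((retr n z.2 j : ℝ))| := by
          rw [abs_pos, sub_ne_zero]
          exact fun h => hj (Subtype.ext h)
        obtain ⟨m, hm⟩ := exists_nat_one_div_lt hpos
        exact mem_iUnion.mpr ⟨(j, m), hm⟩
      obtain ⟨Φ, hΦ⟩ := (hZcl.isCompact).elim_finite_subcover O hOopen hZO
      -- the killer level
      obtain ⟨m', heΦ'⟩ := heΦsurj Φ
      set ψk := kil (Lev n) (eΦ m') with hψk
      have hkilled : Killed ψk.1 (ABad (Lev n).1 (eΦ m')) := hkil2 (Lev n) (eΦ m')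
      set retrK : Yt → Hc := fun y => retrMap (m' + 1) (retrMap (n + 1) y.1) with hretrK
      have hretrKc : Continuous retrK :=
        ((continuous_retrMap _).comp (continuous_retrMap _)).comp continuous_subtype_val
      have hretrK_spec : ∀ x, retrK (pY x) = ψk.1 x := by
        intro x
        show retrMap (m' + 1) (retrMap (n + 1) (φs x)) = ψk.1 x
        rw [hretrL (n + 1) x, hLev_succ n, retr_combine]
      exact absurd (⟨(fun z : Yt × Yt => (retrK z.1, retrK z.2)) '' Z, by
        -- closed
        exact ((hZcl.isCompact).image ((hretrKc.comp continuous_fst).prodMk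
          (hretrKc.comp continuous_snd))).isClosed, by
        -- connected
        exact hZconn.image _ ((hretrKc.comp continuous_fst).prodMk
          (hretrKc.comp continuous_snd)).continuousOn, by
        -- inside the image of ABad
        rintro _ ⟨z, hz, rfl⟩
        obtain ⟨x₁, hx₁⟩ := hpYsurj z.1
        obtain ⟨x₂, hx₂⟩ := hpYsurj z.2
        refine ⟨(x₁, x₂), ?_, ?_⟩
        · rcases mem_iUnion₂.mp (hΦ hz) with ⟨q, hqΦ, hzq⟩
          refine ⟨q, by rwa [heΦ'], le_of_lt ?_⟩
          have e1 : retr n z.1 = (Lev n).1 x₁ := by rw [← hx₁]; exact hretr_spec n x₁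
          have e2 : retr n z.2 = (Lev n).1 x₂ := by rw [← hx₂]; exact hretr_spec n x₂
          rw [← e1, ← e2]
          exact hzq
        · show Sq ψk.1 (x₁, x₂) = (retrK z.1, retrK z.2)
          rw [← hx₁, ← hx₂, hretrK_spec, hretrK_spec]
          rfl, by
        -- second projection
        apply Subset.antisymm
        · rintro w ⟨zz, hzz, hw⟩
          obtain ⟨z, hz, rfl⟩ := hzz
          obtain ⟨x₂, hx₂⟩ := hpYsurj z.2
          refine ⟨x₂, ?_⟩
          rw [← hw]
          show (ψk.1 x₂ : Hc) = retrK z.2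
          rw [← hx₂, hretrK_spec]
        · rintro _ ⟨x, rfl⟩
          have : pY x ∈ Prod.snd '' Z := by rw [hZsnd]; trivial
          obtain ⟨z, hzZ, hz2⟩ := this
          refine ⟨(retrK z.1, retrK z.2), ⟨z, hzZ, rfl⟩, ?_⟩
          show retrK z.2 = ψk.1 x
          rw [hz2, hretrK_spec]⟩ :
        ∃ C : Set (Hc × Hc), IsClosed C ∧ IsConnected C ∧
          C ⊆ Sq ψk.1 '' (ABad (Lev n).1 (eΦ m')) ∧ Prod.snd '' C = Set.range ψk.1)
        hkilled
  · -- Yt is not chainable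
    intro hch
    set WY : Fin k → Set Yt := fun i => {y | 0 < ((retrMap 0 y.1 (i : ℕ) : ℝ))} with hWY
    have hWYo : ∀ i, IsOpen (WY i) := by
      intro i
      refine isOpen_lt continuous_const ?_
      exact continuous_subtype_val.comp ((continuous_apply (i : ℕ)).comp
        ((continuous_retrMap 0).comp continuous_subtype_val))
    have hval0 : ∀ (x : X) (i : Fin k), retrMap 0 (pY x).1 (i : ℕ) = ⟨fs i x, hfsI i x⟩ := by
      intro x i
      show retrMap 0 (φs x) (i : ℕ) = _
      rw [hretrL 0 x]
      show φ0 x (i : ℕ) = _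
      simp only [hφ0, dif_pos i.2]
    set UY : Finset (Set Yt) := Finset.image WY Finset.univ with hUY
    have hUYo : ∀ w ∈ UY, IsOpen w := by
      intro w hw
      obtain ⟨i, _, rfl⟩ := Finset.mem_image.mp hw
      exact hWYo i
    have hUYcov : ⋃₀ (UY : Set (Set Yt)) = Set.univ := by
      apply Subset.antisymm (subset_univ _)
      intro y _
      obtain ⟨x, hx⟩ := hpYsurj y
      have hxv : x ∈ ⋃ i, v i := hvcov (mem_univ x)
      obtain ⟨i, hxi⟩ := mem_iUnion.mp hxv
      refine ⟨WY i, ?_, ?_⟩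
      · exact Finset.mem_coe.mpr (Finset.mem_image_of_mem WY (Finset.mem_univ i))
      · show 0 < ((retrMap 0 y.1 (i : ℕ) : ℝ))
        rw [← hx, hval0 x i]
        show (0 : ℝ) < fs i x
        rw [hfs1 i (subset_closure hxi)]
        norm_num
    obtain ⟨n, V, hVo, hVcov, hVref, hVadj⟩ := hch UY hUYo hUYcov
    refine hnochain ⟨n, fun i => pY ⁻¹' (V i), ?_, ?_, ?_, ?_⟩
    · exact fun i => (hVo i).preimage hpYc
    · apply Subset.antisymm (subset_univ _)
      intro x _
      have : pY x ∈ ⋃ i, V i := by rw [hVcov]; trivial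
      obtain ⟨i, hi⟩ := mem_iUnion.mp this
      exact mem_iUnion.mpr ⟨i, hi⟩
    · intro i
      obtain ⟨w, hwUY, hsub⟩ := hVref i
      obtain ⟨i₀, _, rfl⟩ := Finset.mem_image.mp hwUY
      refine ⟨u i₀, hmemU i₀, ?_⟩
      intro x hx
      have hx' : pY x ∈ WY i₀ := hsub hx
      have hx'' : (0 : ℝ) < fs i₀ x := by
        have hmem : (0 : ℝ) < ((retrMap 0 (pY x).1 (i₀ : ℕ) : ℝ)) := hx'
        rw [hval0 x i₀] at hmem
        exact hmem
      by_contra hxu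
      have : fs i₀ x = 0 := hfs0 i₀ hxu
      rw [this] at hx''
      exact lt_irrefl 0 hx''
    · intro i j
      rw [← Set.preimage_inter]
      rw [← hVadj i j]
      constructor
      · rintro ⟨x, hx⟩
        exact ⟨pY x, hx⟩
      · rintro ⟨y, hy⟩
        obtain ⟨x, hx⟩ := hpYsurj y
        exact ⟨x, show pY x ∈ V i ∩ V j by rw [hx]; exact hy⟩

end Main

end
end NMC


-- see proof below
theorem nonmetric_to_metric_counterexample_11 :
    (∃ (X : Type u) (_ : TopologicalSpace X),
      CompactSpace X ∧ T2Space X ∧ ConnectedSpace X ∧ SurjectiveSemispanZero X ∧ ¬ Chainable X) →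
    ∃ (Y : Type) (_ : TopologicalSpace Y),
      TopologicalSpace.MetrizableSpace Y ∧
      CompactSpace Y ∧ T2Space Y ∧ ConnectedSpace Y ∧ SurjectiveSemispanZero Y ∧ ¬ Chainable Y := by
  rintro ⟨X, tX, hcomp, ht2, hconn, hssz, hnch⟩
  letI := tX
  haveI := hcomp
  haveI := ht2
  haveI := hconn
  exact NMC.main_aux hssz hnch
end

section
/- Let X be a compact Hausdorff space and let F and G be disjoint closed subsets of X × X. Then there exist finitely many closed subsets A_0, …, A_{n-1}, B_0, …, B_{n-1}, C_0, …, C_{m-1}, D_0, …, D_{m-1} of X such that F ⊆ ⋃_{i<n} (A_i × B_i), G ⊆ ⋃_{j<m} (C_j × D_j), and (⋃_{i<n} (A_i × B_i)) ∩ (⋃_{j<m} (C_j × D_j)) = ∅. -/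
open Set Filter Topology

lemma rect_cover_aux {X : Type*} [TopologicalSpace X] [CompactSpace X] [T2Space X]
    {K U : Set (X × X)} (hK : IsCompact K) (hU : IsOpen U) (hKU : K ⊆ U) :
    ∃ (n : ℕ) (A B : Fin n → Set X), (∀ i, IsClosed (A i)) ∧ (∀ i, IsClosed (B i)) ∧
      K ⊆ ⋃ i, A i ×ˢ B i ∧ (⋃ i, A i ×ˢ B i) ⊆ U := by
  have h : ∀ p ∈ K, ∃ ab : Set X × Set X, IsClosed ab.1 ∧ IsClosed ab.2 ∧
      ab.1 ×ˢ ab.2 ∈ 𝓝 p ∧ ab.1 ×ˢ ab.2 ⊆ U := by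
    intro p hp
    have hU' : U ∈ 𝓝 p := hU.mem_nhds (hKU hp)
    rw [nhds_prod_eq, Filter.mem_prod_iff] at hU'
    obtain ⟨s, hs, t, ht, hst⟩ := hU'
    obtain ⟨a, ha, hac, has⟩ := exists_mem_nhds_isClosed_subset hs
    obtain ⟨b, hb, hbc, hbt⟩ := exists_mem_nhds_isClosed_subset ht
    refine ⟨(a, b), hac, hbc, ?_, (Set.prod_mono has hbt).trans hst⟩
    rw [nhds_prod_eq]; exact Filter.prod_mem_prod ha hb
  choose! ab hac hbc hmem hsub using h
  obtain ⟨t, hts, hcover⟩ := hK.elim_nhds_subcover (fun p => (ab p).1 ×ˢ (ab p).2)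
    (fun p hp => hmem p hp)
  let e := t.equivFin
  refine ⟨t.card, fun i => (ab (e.symm i)).1, fun i => (ab (e.symm i)).2,
    fun i => hac _ (hts _ (e.symm i).2), fun i => hbc _ (hts _ (e.symm i).2), ?_, ?_⟩
  · intro p hp
    obtain ⟨q, hq, hpq⟩ := Set.mem_iUnion₂.1 (hcover hp)
    exact Set.mem_iUnion.2 ⟨e ⟨q, hq⟩, by simpa using hpq⟩
  · exact Set.iUnion_subset fun i => hsub _ (hts _ (e.symm i).2)

theorem separation_by_products (X : Type*) [TopologicalSpace X]
    [CompactSpace X] [T2Space X]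
    (F G : Set (X × X)) (hF : IsClosed F) (hG : IsClosed G) (hFG : F ∩ G = ∅) :
    ∃ (n m : ℕ) (A B : Fin n → Set X) (C D : Fin m → Set X),
      (∀ i, IsClosed (A i)) ∧ (∀ i, IsClosed (B i)) ∧
      (∀ j, IsClosed (C j)) ∧ (∀ j, IsClosed (D j)) ∧
      F ⊆ ⋃ i, A i ×ˢ B i ∧
      G ⊆ ⋃ j, C j ×ˢ D j ∧
      (⋃ i, A i ×ˢ B i) ∩ (⋃ j, C j ×ˢ D j) = ∅ := by
  have hFc : IsCompact F := hF.isCompact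
  have hGc : IsCompact G := hG.isCompact
  have hdisj : Disjoint F G := Set.disjoint_iff_inter_eq_empty.2 hFG
  obtain ⟨U, V, hUo, hVo, hFU, hGV, hUV⟩ := SeparatedNhds.of_isCompact_isCompact hFc hGc hdisj
  obtain ⟨n, A, B, hA, hB, hFAB, hABU⟩ := rect_cover_aux hFc hUo hFU
  obtain ⟨m, C, D, hC, hD, hGCD, hCDV⟩ := rect_cover_aux hGc hVo hGV
  refine ⟨n, m, A, B, C, D, hA, hB, hC, hD, hFAB, hGCD, ?_⟩
  exact Set.disjoint_iff_inter_eq_empty.1 (hUV.mono hABU hCDV)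
end

section
/- Let κ be a nonempty discrete topological space and X a continuum. Let g : β(κ × X) → Ultrafilter(κ) be the continuous extension (via the universal property of the Stone–Čech compactification) of the map κ × X → Ultrafilter(κ) sending (α, x) to the principal ultrafilter at α, where Ultrafilter(κ) carries its usual compact Hausdorff topology. Then for every ultrafilter u on κ the fiber g⁻¹({u}) is a nonempty, compact, connected subset of β(κ × X). -/
open Set

section Aux

set_option linter.unusedSectionVars false

variable {κ : Type*} [TopologicalSpace κ] [DiscreteTopology κ]
  {X : Type*} [TopologicalSpace X] [CompactSpace X] [T2Space X] [ConnectedSpace X]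

/-- The closure in `StoneCech (κ × X)` of the image of `A × X`. -/
noncomputable def Fclo (X : Type*) [TopologicalSpace X] (A : Set κ) :
    Set (StoneCech (κ × X)) :=
  closure (stoneCechUnit '' (A ×ˢ (Set.univ : Set X)))

lemma Fclo_union_compl (A : Set κ) :
    Fclo X A ∪ Fclo X Aᶜ = Set.univ := by
  rw [Fclo, Fclo, ← closure_union, ← Set.image_union]
  have h : A ×ˢ (Set.univ : Set X) ∪ Aᶜ ×ˢ (Set.univ : Set X) = Set.univ := by
    ext ⟨a, x⟩
    by_cases ha : a ∈ A <;> simp [ha]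
  rw [h, Set.image_univ]
  exact denseRange_stoneCechUnit.closure_range

lemma Fclo_disjoint (A : Set κ) :
    Fclo X A ∩ Fclo X Aᶜ = ∅ := by
  classical
  have hχc : Continuous (fun p : κ × X => decide (p.1 ∈ A)) :=
    (continuous_of_discreteTopology (f := fun a : κ => decide (a ∈ A))).comp continuous_fst
  have hEunit : ∀ p : κ × X,
      stoneCechExtend hχc (stoneCechUnit p) = decide (p.1 ∈ A) := fun p =>
    congrFun (stoneCechExtend_extends hχc) p
  have h1 : Fclo X A ⊆ stoneCechExtend hχc ⁻¹' {true} := by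
    apply closure_minimal _ (IsClosed.preimage (continuous_stoneCechExtend hχc)
      (isClosed_discrete _))
    rintro y ⟨⟨a, x⟩, ⟨ha, -⟩, rfl⟩
    simp [hEunit, ha]
  have h2 : Fclo X Aᶜ ⊆ stoneCechExtend hχc ⁻¹' {false} := by
    apply closure_minimal _ (IsClosed.preimage (continuous_stoneCechExtend hχc)
      (isClosed_discrete _))
    rintro y ⟨⟨a, x⟩, ⟨ha, -⟩, rfl⟩
    have ha' : a ∉ A := ha
    simp [hEunit, ha']
  apply Set.eq_empty_of_forall_notMem
  rintro y ⟨hy1, hy2⟩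
  have := h1 hy1
  have := h2 hy2
  simp_all

lemma Fclo_compl_eq (A : Set κ) : Fclo X Aᶜ = (Fclo X A)ᶜ := by
  ext y
  constructor
  · intro h hmem
    exact Set.notMem_empty y (Fclo_disjoint (X := X) A ▸ (⟨hmem, h⟩ : y ∈ Fclo X A ∩ Fclo X Aᶜ))
  · intro h
    have hu : y ∈ Fclo X A ∪ Fclo X Aᶜ := (Fclo_union_compl (X := X) A) ▸ Set.mem_univ y
    rcases hu with h' | h'
    · exact absurd h' h
    · exact h'

lemma Fclo_isClopen (A : Set κ) : IsClopen (Fclo X A) := by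
  refine ⟨isClosed_closure, ?_⟩
  have h : Fclo X A = (Fclo X Aᶜ)ᶜ := by rw [← Fclo_compl_eq (X := X) Aᶜ, compl_compl]
  rw [h]
  exact isClosed_closure.isOpen_compl

end Aux

theorem ultracopower_is_continuum
    (κ : Type*) [TopologicalSpace κ] [DiscreteTopology κ] [Nonempty κ]
    (X : Type*) [TopologicalSpace X] [CompactSpace X] [T2Space X] [ConnectedSpace X]
    (g : StoneCech (κ × X) → Ultrafilter κ) (hg : Continuous g)
    (hgu : ∀ p : κ × X, g (stoneCechUnit p) = (pure p.1 : Ultrafilter κ))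
    (u : Ultrafilter κ) :
    (g ⁻¹' {u}).Nonempty ∧ IsCompact (g ⁻¹' {u}) ∧ IsConnected (g ⁻¹' {u}) := by
  classical
  -- If y ∈ Fclo X A then A ∈ g y.
  have key : ∀ (A : Set κ) (y : StoneCech (κ × X)), y ∈ Fclo X A → A ∈ g y := by
    intro A y hy
    have hsub : Fclo X A ⊆ g ⁻¹' {v : Ultrafilter κ | A ∈ v} := by
      apply closure_minimal _ ((ultrafilter_isClosed_basic A).preimage hg)
      rintro z ⟨⟨a, x⟩, ⟨ha, -⟩, rfl⟩
      simp only [Set.mem_preimage, Set.mem_setOf_eq, hgu]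
      exact ha
    exact hsub hy
  -- The fiber is the intersection of the clopen sets Fclo X A over A ∈ u.
  have fiber_eq : g ⁻¹' {u} = ⋂ A ∈ (u : Ultrafilter κ), Fclo X A := by
    ext y
    simp only [Set.mem_preimage, Set.mem_singleton_iff, Set.mem_iInter]
    constructor
    · rintro rfl A hA
      have hu : y ∈ Fclo X A ∪ Fclo X Aᶜ := (Fclo_union_compl (X := X) A) ▸ Set.mem_univ y
      rcases hu with h | h
      · exact h
      · exact absurd (key Aᶜ y h) (Ultrafilter.compl_notMem_iff.mpr hA)
    · intro h
      have hle : (g y : Filter κ) ≤ (u : Filter κ) := fun A hA => key A y (h A hA)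
      exact Ultrafilter.coe_injective (u.unique hle)
  -- Nonempty: g is surjective.
  have hsurj : Function.Surjective g := by
    have hcl : IsClosed (Set.range g) := (isCompact_range hg).isClosed
    have hdense : Set.range (pure : κ → Ultrafilter κ) ⊆ Set.range g := by
      rintro _ ⟨a, rfl⟩
      exact ⟨stoneCechUnit (a, Classical.arbitrary X), hgu _⟩
    intro v
    have h1 : v ∈ closure (Set.range (pure : κ → Ultrafilter κ)) := by
      rw [denseRange_pure.closure_range]; trivial
    have h2 := closure_mono hdense h1
    rwa [hcl.closure_eq] at h2
  obtain ⟨y₀, hy₀⟩ := hsurj u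
  have hy₀' : y₀ ∈ g ⁻¹' {u} := hy₀
  -- Compact: closed subset of a compact space.
  have hcomp : IsCompact (g ⁻¹' {u}) :=
    (isClosed_singleton.preimage hg).isCompact
  refine ⟨⟨y₀, hy₀'⟩, hcomp, ?_⟩
  -- Connected: the fiber equals the connected component of y₀.
  have hconn : g ⁻¹' {u} = connectedComponent y₀ := by
    apply Set.Subset.antisymm
    · -- fiber ⊆ every clopen set containing y₀
      rw [connectedComponent_eq_iInter_isClopen]
      refine Set.subset_iInter fun ⟨C, hC, hy₀C⟩ => ?_
      set x₀ : X := Classical.arbitrary X with hx₀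
      set A : Set κ := {a : κ | stoneCechUnit (a, x₀) ∈ C} with hA
      have hclopen : ∀ a : κ, IsClopen ((fun x : X => stoneCechUnit (a, x)) ⁻¹' C) :=
        fun a => hC.preimage (continuous_stoneCechUnit.comp (Continuous.prodMk_right a))
      have hslice : ∀ a : κ, a ∈ A → ∀ x : X, stoneCechUnit (a, x) ∈ C := by
        intro a ha x
        rcases isClopen_iff.mp (hclopen a) with h | h
        · exact absurd (show x₀ ∈ (fun x : X => stoneCechUnit (a, x)) ⁻¹' C from ha)
            (h ▸ Set.notMem_empty x₀)
        · exact (show x ∈ (fun x : X => stoneCechUnit (a, x)) ⁻¹' C from h ▸ Set.mem_univ x)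
      have hsliceC : ∀ a : κ, a ∉ A → ∀ x : X, stoneCechUnit (a, x) ∉ C := by
        intro a ha x hx
        rcases isClopen_iff.mp (hclopen a) with h | h
        · exact (h ▸ hx : x ∈ (∅ : Set X)).elim
        · exact ha (show x₀ ∈ (fun x : X => stoneCechUnit (a, x)) ⁻¹' C from h ▸ Set.mem_univ x₀)
      have hFsub : Fclo X A ⊆ C := by
        apply closure_minimal _ hC.isClosed
        rintro _ ⟨⟨a, x⟩, ⟨ha, -⟩, rfl⟩
        exact hslice a ha x
      have hFsubC : Fclo X Aᶜ ⊆ Cᶜ := by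
        apply closure_minimal _ hC.isOpen.isClosed_compl
        rintro _ ⟨⟨a, x⟩, ⟨ha, -⟩, rfl⟩
        exact hsliceC a ha x
      have hy₀A : y₀ ∈ Fclo X A := by
        have hu2 : y₀ ∈ Fclo X A ∪ Fclo X Aᶜ := (Fclo_union_compl (X := X) A) ▸ Set.mem_univ y₀
        rcases hu2 with h | h
        · exact h
        · exact absurd hy₀C (hFsubC h)
      have hAu : A ∈ u := hy₀ ▸ key A y₀ hy₀A
      intro z hz
      rw [fiber_eq] at hz
      exact hFsub (Set.mem_iInter₂.mp hz A hAu)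
    · rw [fiber_eq]
      refine Set.subset_iInter₂ fun A hA => ?_
      have hy₀A : y₀ ∈ Fclo X A := by
        have hz : y₀ ∈ g ⁻¹' {u} := hy₀'
        rw [fiber_eq] at hz
        exact Set.mem_iInter₂.mp hz A hA
      exact (Fclo_isClopen A).connectedComponent_subset hy₀A
  rw [hconn]
  exact isConnected_connectedComponent
end

section
/- Let κ be a discrete topological space, X a compact Hausdorff space, and g : β(κ × X) → Ultrafilter(κ) the continuous extension of the map sending (α, x) to the principal ultrafilter at α. Let u be an ultrafilter on κ and let F and G be closed subsets of κ × X. Then cl_{β(κ×X)}(ι[F]) ∩ g⁻¹({u}) = cl_{β(κ×X)}(ι[G]) ∩ g⁻¹({u}) if and only if the set {α ∈ κ : {x ∈ X : (α,x) ∈ F} = {x ∈ X : (α,x) ∈ G}} belongs to u. -/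
open Set Filter Topology

/-- A function on `κ × X` with `κ` discrete is continuous if each slice is continuous. -/
lemma aux_cont_of_discrete {κ X Y : Type*} [TopologicalSpace κ] [DiscreteTopology κ]
    [TopologicalSpace X] [TopologicalSpace Y] (f : κ → X → Y)
    (hf : ∀ α, Continuous (f α)) : Continuous (fun p : κ × X => f p.1 p.2) := by
  rw [continuous_iff_continuousAt]
  rintro ⟨α, x⟩
  have hmem : {p : κ × X | p.1 = α} ∈ 𝓝 (α, x) :=
    ((isOpen_discrete ({α} : Set κ)).preimage continuous_fst).mem_nhds rfl
  have h1 : (fun p : κ × X => f α p.2) =ᶠ[𝓝 (α, x)] fun p : κ × X => f p.1 p.2 := by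
    filter_upwards [hmem] with p hp
    have hp' : p.1 = α := hp
    rw [hp']
  exact (((hf α).comp continuous_snd).continuousAt).congr h1

lemma aux_subset
    {κ : Type*} [TopologicalSpace κ] [DiscreteTopology κ]
    {X : Type*} [TopologicalSpace X] [CompactSpace X] [T2Space X]
    (g : StoneCech (κ × X) → Ultrafilter κ) (hg : Continuous g)
    (hgu : ∀ p : κ × X, g (stoneCechUnit p) = (pure p.1 : Ultrafilter κ))
    (u : Ultrafilter κ) (F G : Set (κ × X))
    (hA : {α : κ | {x : X | (α, x) ∈ F} = {x : X | (α, x) ∈ G}} ∈ u) :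
    closure (stoneCechUnit '' F) ∩ g ⁻¹' {u} ⊆ closure (stoneCechUnit '' G) ∩ g ⁻¹' {u} := by
  set A := {α : κ | {x : X | (α, x) ∈ F} = {x : X | (α, x) ∈ G}} with hAdef
  rintro p ⟨hpF, hpu⟩
  refine ⟨?_, hpu⟩
  have hpu' : g p = u := hpu
  have hsplit : F = (F ∩ A ×ˢ (univ : Set X)) ∪ (F ∩ Aᶜ ×ˢ (univ : Set X)) := by
    ext ⟨a, x⟩
    by_cases h : a ∈ A <;> simp [h]
  rw [hsplit, image_union, closure_union] at hpF
  rcases hpF with h1 | h2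
  · refine closure_mono (image_mono ?_) h1
    rintro ⟨a, x⟩ ⟨hFa, hAa, -⟩
    have hAa' : {x : X | (a, x) ∈ F} = {x : X | (a, x) ∈ G} := hAa
    show x ∈ {x : X | (a, x) ∈ G}
    rw [← hAa']
    exact hFa
  · exfalso
    have hmaps : MapsTo g (stoneCechUnit '' (F ∩ Aᶜ ×ˢ (univ : Set X)))
        {v : Ultrafilter κ | Aᶜ ∈ v} := by
      rintro q ⟨⟨a, x⟩, ⟨-, ha, -⟩, rfl⟩
      have : g (stoneCechUnit (a, x)) = pure a := hgu (a, x)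
      rw [this]
      exact ha
    have hcl : g p ∈ closure {v : Ultrafilter κ | Aᶜ ∈ v} := map_mem_closure hg h2 hmaps
    rw [(ultrafilter_isClosed_basic (Aᶜ : Set κ)).closure_eq] at hcl
    rw [hpu'] at hcl
    exact (Ultrafilter.compl_mem_iff_notMem.mp hcl) hA

lemma aux_not_subset
    {κ : Type*} [TopologicalSpace κ] [DiscreteTopology κ]
    {X : Type*} [TopologicalSpace X] [CompactSpace X] [T2Space X]
    (g : StoneCech (κ × X) → Ultrafilter κ) (hg : Continuous g)
    (hgu : ∀ p : κ × X, g (stoneCechUnit p) = (pure p.1 : Ultrafilter κ))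
    (u : Ultrafilter κ) (F G : Set (κ × X)) (hG : IsClosed G)
    (hB : {α : κ | ∃ x : X, (α, x) ∈ F ∧ (α, x) ∉ G} ∈ u) :
    ¬ (closure (stoneCechUnit '' F) ∩ g ⁻¹' {u} ⊆ closure (stoneCechUnit '' G)) := by
  intro hsub
  set B := {α : κ | ∃ x : X, (α, x) ∈ F ∧ (α, x) ∉ G} with hBdef
  obtain ⟨α0, hα0⟩ := u.nonempty_of_mem hB
  obtain ⟨x0, -, -⟩ := hα0
  have hXne : Nonempty X := ⟨x0⟩
  -- choose witnesses
  classical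
  let xf : κ → X := fun α => if h : α ∈ B then h.choose else Classical.arbitrary X
  have hxf : ∀ α ∈ B, (α, xf α) ∈ F ∧ (α, xf α) ∉ G := by
    intro α h
    simp only [xf, dif_pos h]
    exact h.choose_spec
  let f : κ → StoneCech (κ × X) := fun α => stoneCechUnit (α, xf α)
  -- limit point
  obtain ⟨p, -, hp⟩ := (isCompact_univ :
      IsCompact (univ : Set (StoneCech (κ × X)))).ultrafilter_le_nhds (u.map f)
      (by simp)
  have hT : Tendsto f ↑u (𝓝 p) := by
    rw [Filter.Tendsto, ← Ultrafilter.coe_map]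
    exact hp
  -- p is in the closure of ι '' F
  have hpF : p ∈ closure (stoneCechUnit '' F) := by
    rw [mem_closure_iff_ultrafilter]
    refine ⟨u.map f, ?_, hp⟩
    rw [Ultrafilter.mem_map]
    exact u.mem_of_superset hB fun α hα => ⟨(α, xf α), (hxf α hα).1, rfl⟩
  -- g p = u
  have hgp : g p = u := by
    have h1 : Tendsto (fun α => (pure α : Ultrafilter κ)) ↑u (𝓝 (g p)) := by
      have := (hg.tendsto p).comp hT
      refine this.congr fun α => ?_
      simp [f, hgu]
    have h2 : Tendsto (fun α => (pure α : Ultrafilter κ)) ↑u (𝓝 u) := by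
      rw [Filter.Tendsto, ← Ultrafilter.coe_map]
      exact ultrafilter_converges_iff.mpr (bind_pure u).symm
    exact tendsto_nhds_unique h1 h2
  -- Urysohn functions
  have hslice : ∀ α : κ, IsClosed {x : X | (α, x) ∈ G} :=
    fun α => hG.preimage (Continuous.prodMk_right α)
  have hsep : ∀ α : κ, ∃ ψ : C(X, ℝ),
      (∀ x, (α, x) ∈ G → ψ x = 0) ∧ (α ∈ B → ψ (xf α) = 1) ∧ ∀ x, ψ x ∈ Icc (0 : ℝ) 1 := by
    intro α
    by_cases h : α ∈ B
    · have hd : Disjoint {x : X | (α, x) ∈ G} ({xf α} : Set X) := by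
        rw [Set.disjoint_singleton_right]
        exact (hxf α h).2
      obtain ⟨ψ, h0, h1, h01⟩ := exists_continuous_zero_one_of_isClosed (hslice α)
        (isClosed_singleton (x := xf α)) hd
      exact ⟨ψ, fun x hx => h0 hx, fun _ => h1 rfl, h01⟩
    · exact ⟨0, fun x _ => rfl, fun hc => absurd hc h,
        fun x => ⟨le_refl 0, zero_le_one⟩⟩
  choose ψ hψ0 hψ1 hψ01 using hsep
  let φ : κ × X → Set.Icc (0 : ℝ) 1 := fun q => ⟨ψ q.1 q.2, hψ01 q.1 q.2⟩
  have hφ : Continuous φ := by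
    apply Continuous.subtype_mk
    exact aux_cont_of_discrete (fun α => ψ α) (fun α => (ψ α).continuous)
  let φe := stoneCechExtend hφ
  have hφe : φe ∘ stoneCechUnit = φ := stoneCechExtend_extends hφ
  -- φe vanishes on closure of ι '' G
  have hzero : ∀ q ∈ closure (stoneCechUnit '' G), φe q = ⟨0, by norm_num⟩ := by
    have hcl : IsClosed (φe ⁻¹' {(⟨0, by norm_num⟩ : Set.Icc (0:ℝ) 1)}) :=
      isClosed_singleton.preimage (continuous_stoneCechExtend hφ)
    have hsubG : stoneCechUnit '' G ⊆ φe ⁻¹' {(⟨0, by norm_num⟩ : Set.Icc (0:ℝ) 1)} := by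
      rintro q ⟨⟨a, x⟩, hax, rfl⟩
      have : φe (stoneCechUnit (a, x)) = φ (a, x) := congrFun hφe (a, x)
      simp only [Set.mem_preimage, Set.mem_singleton_iff, this]
      exact Subtype.ext (hψ0 a x hax)
    intro q hq
    exact (closure_minimal hsubG hcl) hq
  have hpG : p ∈ closure (stoneCechUnit '' G) := hsub ⟨hpF, hgp⟩
  have h0 : φe p = ⟨0, by norm_num⟩ := hzero p hpG
  -- but φe p = 1
  have h1 : φe p = ⟨1, by norm_num⟩ := by
    have hT1 : Tendsto (φe ∘ f) ↑u (𝓝 (φe p)) := ((continuous_stoneCechExtend hφ).tendsto p).comp hT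
    have heq : (φe ∘ f) =ᶠ[↑u] (fun _ => (⟨1, by norm_num⟩ : Set.Icc (0:ℝ) 1)) := by
      filter_upwards [hB] with α hα
      have : φe (stoneCechUnit (α, xf α)) = φ (α, xf α) := congrFun hφe (α, xf α)
      simp only [Function.comp_apply, f, this]
      exact Subtype.ext (hψ1 α hα)
    have hT2 : Tendsto (fun _ : κ => (⟨1, by norm_num⟩ : Set.Icc (0:ℝ) 1)) ↑u (𝓝 (φe p)) :=
      hT1.congr' heq
    exact tendsto_nhds_unique hT2 tendsto_const_nhds
  rw [h0] at h1
  have : (0 : ℝ) = 1 := congrArg Subtype.val h1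
  norm_num at this

theorem closure_inter_ultracopower_eq_iff
    (κ : Type*) [TopologicalSpace κ] [DiscreteTopology κ]
    (X : Type*) [TopologicalSpace X] [CompactSpace X] [T2Space X]
    (g : StoneCech (κ × X) → Ultrafilter κ) (hg : Continuous g)
    (hgu : ∀ p : κ × X, g (stoneCechUnit p) = (pure p.1 : Ultrafilter κ))
    (u : Ultrafilter κ)
    (F G : Set (κ × X)) (hF : IsClosed F) (hG : IsClosed G) :
    closure (stoneCechUnit '' F) ∩ g ⁻¹' {u} = closure (stoneCechUnit '' G) ∩ g ⁻¹' {u} ↔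
      {α : κ | {x : X | (α, x) ∈ F} = {x : X | (α, x) ∈ G}} ∈ u := by
  constructor
  · intro h
    by_contra hA
    rw [← Ultrafilter.compl_mem_iff_notMem] at hA
    have hsubB : {α : κ | {x : X | (α, x) ∈ F} = {x : X | (α, x) ∈ G}}ᶜ ⊆
        {α : κ | ∃ x : X, (α, x) ∈ F ∧ (α, x) ∉ G} ∪
        {α : κ | ∃ x : X, (α, x) ∈ G ∧ (α, x) ∉ F} := by
      intro α hα
      simp only [Set.mem_compl_iff, Set.mem_setOf_eq] at hα
      by_contra hc
      simp only [Set.mem_union, Set.mem_setOf_eq, not_or, not_exists, not_and, not_not] at hc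
      obtain ⟨h1, h2⟩ := hc
      exact hα (Set.ext fun x => ⟨fun hx => h1 x hx, fun hx => h2 x hx⟩)
    have hmem := u.mem_of_superset hA hsubB
    rcases (Ultrafilter.union_mem_iff.mp hmem) with hB | hB
    · exact aux_not_subset g hg hgu u F G hG hB
        (fun q hq => ((h ▸ hq : q ∈ closure (stoneCechUnit '' G) ∩ g ⁻¹' {u})).1)
    · exact aux_not_subset g hg hgu u G F hF hB
        (fun q hq => ((h.symm ▸ hq : q ∈ closure (stoneCechUnit '' F) ∩ g ⁻¹' {u})).1)
  · intro hA
    have hA' : {α : κ | {x : X | (α, x) ∈ G} = {x : X | (α, x) ∈ F}} ∈ u := by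
      have : {α : κ | {x : X | (α, x) ∈ G} = {x : X | (α, x) ∈ F}} =
          {α : κ | {x : X | (α, x) ∈ F} = {x : X | (α, x) ∈ G}} := by
        ext α; simp [eq_comm]
      rw [this]; exact hA
    exact Set.Subset.antisymm (aux_subset g hg hgu u F G hA) (aux_subset g hg hgu u G F hA')
end
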